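/- arXiv:1808.08844 — 9 statements merged into one kernel-verified Lean document; each statement's English description precedes it below -/
import Mathlib

section
/- The Alexander operator C_0(f)(z) = ∫_0^z f(w)/w dw is a bounded linear operator on B_α^0 with operator norm exactly 1: for every f ∈ B_α^0, ‖C_0(f)‖_{B_α} ≤ ‖f‖_{B_α}, and equality holds for f(z) = z. -/
/-- The Alexander operator C_0(f)(z) = ∫_0^z f(w)/w dw has operator norm exactly 1 on B_α^0:
its Bloch seminorm sup (1-|z|²)^α |f(z)/z| is at most ‖f‖_{B_α}, and for f(z) = z
(whose image is again f(z) = z) the norm sup (1-|z|²)^α |deriv id| equals 1 = ‖id‖_{B_α}. -/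
theorem stmt_7 (α : ℝ) (hα : 0 < α) :
    (∀ (f : ℂ → ℂ) (M : ℝ), DifferentiableOn ℂ f (Metric.ball (0:ℂ) 1) → f 0 = 0 →
      (∀ z ∈ Metric.ball (0:ℂ) 1, (1 - ‖z‖ ^ 2) ^ α * ‖deriv f z‖ ≤ M) →
      ∀ z ∈ Metric.ball (0:ℂ) 1, z ≠ 0 → (1 - ‖z‖ ^ 2) ^ α * ‖f z / z‖ ≤ M) ∧
    IsLUB {c : ℝ | ∃ z ∈ Metric.ball (0:ℂ) 1,
      c = (1 - ‖z‖ ^ 2) ^ α * ‖deriv (fun w : ℂ => w) z‖} 1 := by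
  constructor
  · intro f M hdiff hf0 hM z hz hz0
    have hz1 : ‖z‖ < 1 := by simpa [Metric.mem_ball, dist_zero_right] using hz
    have hpos : (0:ℝ) < 1 - ‖z‖ ^ 2 := by nlinarith [norm_nonneg z]
    have hrpos : (0:ℝ) < (1 - ‖z‖ ^ 2) ^ α := Real.rpow_pos_of_pos hpos α
    set C := M / (1 - ‖z‖ ^ 2) ^ α with hC
    have hsub : Metric.closedBall (0:ℂ) ‖z‖ ⊆ Metric.ball 0 1 := by
      intro w hw
      simp only [Metric.mem_closedBall, Metric.mem_ball, dist_zero_right] at *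
      exact lt_of_le_of_lt hw hz1
    have hderiv : ∀ w ∈ Metric.closedBall (0:ℂ) ‖z‖,
        HasFDerivWithinAt f ((1 : ℂ →L[ℂ] ℂ).smulRight (deriv f w))
          (Metric.closedBall (0:ℂ) ‖z‖) w := by
      intro w hw
      have hd : DifferentiableAt ℂ f w :=
        hdiff.differentiableAt (Metric.isOpen_ball.mem_nhds (hsub hw))
      exact hd.hasDerivAt.hasFDerivAt.hasFDerivWithinAt
    have hbound : ∀ w ∈ Metric.closedBall (0:ℂ) ‖z‖,
        ‖(1 : ℂ →L[ℂ] ℂ).smulRight (deriv f w)‖ ≤ C := by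
      intro w hw
      have hw' : ‖w‖ ≤ ‖z‖ := by
        simpa [Metric.mem_closedBall, dist_zero_right] using hw
      have hwpos : (0:ℝ) ≤ 1 - ‖z‖ ^ 2 := hpos.le
      have hmono : (1 - ‖z‖ ^ 2) ^ α ≤ (1 - ‖w‖ ^ 2) ^ α := by
        apply Real.rpow_le_rpow hwpos _ hα.le
        nlinarith [norm_nonneg w, norm_nonneg z]
      have h1 := hM w (hsub hw)
      have h2 : (1 - ‖z‖ ^ 2) ^ α * ‖deriv f w‖ ≤ M := by
        calc (1 - ‖z‖ ^ 2) ^ α * ‖deriv f w‖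
            ≤ (1 - ‖w‖ ^ 2) ^ α * ‖deriv f w‖ := by
              exact mul_le_mul_of_nonneg_right hmono (norm_nonneg _)
          _ ≤ M := h1
      have h3 : ‖deriv f w‖ ≤ C := by
        rw [hC, le_div_iff₀ hrpos]
        linarith [h2]
      have hone : ‖(1 : ℂ →L[ℂ] ℂ)‖ = 1 := by
        rw [ContinuousLinearMap.one_def, ContinuousLinearMap.norm_id]
      calc ‖(1 : ℂ →L[ℂ] ℂ).smulRight (deriv f w)‖
          = ‖(1 : ℂ →L[ℂ] ℂ)‖ * ‖deriv f w‖ := ContinuousLinearMap.norm_smulRight_apply _ _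
        _ = ‖deriv f w‖ := by rw [hone, one_mul]
        _ ≤ C := h3
    have h0mem : (0:ℂ) ∈ Metric.closedBall (0:ℂ) ‖z‖ :=
      Metric.mem_closedBall_self (norm_nonneg z)
    have hzmem : z ∈ Metric.closedBall (0:ℂ) ‖z‖ := by
      simp [Metric.mem_closedBall, dist_zero_right]
    have key := (convex_closedBall (0:ℂ) ‖z‖).norm_image_sub_le_of_norm_hasFDerivWithin_le
      hderiv hbound h0mem hzmem
    rw [hf0, sub_zero, sub_zero] at key
    have hzn : (0:ℝ) < ‖z‖ := norm_pos_iff.mpr hz0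
    have hq : ‖f z / z‖ ≤ C := by
      rw [norm_div, div_le_iff₀ hzn]
      linarith [key]
    calc (1 - ‖z‖ ^ 2) ^ α * ‖f z / z‖
        ≤ (1 - ‖z‖ ^ 2) ^ α * C := mul_le_mul_of_nonneg_left hq hrpos.le
      _ = M := by rw [hC, mul_div_cancel₀ _ hrpos.ne']
  · have hds : deriv (fun w : ℂ => w) = fun _ => 1 := by
      funext w; exact deriv_id w
    constructor
    · rintro c ⟨z, hz, rfl⟩
      have hz1 : ‖z‖ < 1 := by simpa [Metric.mem_ball, dist_zero_right] using hz
      have h0 : (0:ℝ) ≤ 1 - ‖z‖ ^ 2 := by nlinarith [norm_nonneg z]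
      have h1 : 1 - ‖z‖ ^ 2 ≤ 1 := by nlinarith [norm_nonneg z]
      have := Real.rpow_le_one h0 h1 hα.le
      simpa [hds] using this
    · intro b hb
      have hmem : (1:ℝ) ∈ {c : ℝ | ∃ z ∈ Metric.ball (0:ℂ) 1,
          c = (1 - ‖z‖ ^ 2) ^ α * ‖deriv (fun w : ℂ => w) z‖} := by
        exact ⟨0, by simp, by simp [hds]⟩
      exact hb hmem
end

section
/- Let β > α > 0. The β-Cesàro operator C_β is unbounded on B_α^0: for the function f(z) = z (which lies in B_α^0), sup_{z∈D} (1-|z|^2)^α |f(z)/(z(1-z)^β)| = ∞; indeed along z = t ∈ (0,1), (1+t)^α/(1-t)^{β-α} → ∞ as t → 1. -/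
open Filter Set Real Topology

private lemma tend_aux (α β : ℝ) (hα : 0 < α) (hβ : α < β) :
    Filter.Tendsto (fun t : ℝ => (1 + t) ^ α / (1 - t) ^ (β - α))
      (nhdsWithin 1 (Set.Ioo (0:ℝ) 1)) Filter.atTop := by
  have h1 : Tendsto (fun t : ℝ => (1 + t) ^ α) (𝓝[Set.Ioo (0:ℝ) 1] 1) (𝓝 ((2:ℝ) ^ α)) := by
    have hc : Continuous fun t : ℝ => (1 + t) ^ α :=
      (continuous_const.add continuous_id).rpow_const (fun x => Or.inr hα.le)
    have := (hc.tendsto 1).mono_left (nhdsWithin_le_nhds (s := Set.Ioo (0:ℝ) 1))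
    norm_num at this
    simpa using this
  have h2 : Tendsto (fun t : ℝ => (1 - t) ^ (β - α)) (𝓝[Set.Ioo (0:ℝ) 1] 1) (𝓝[>] 0) := by
    rw [tendsto_nhdsWithin_iff]
    constructor
    · have hc : Continuous fun t : ℝ => (1 - t) ^ (β - α) :=
        (continuous_const.sub continuous_id).rpow_const (fun x => Or.inr (by linarith))
      have := (hc.tendsto 1).mono_left (nhdsWithin_le_nhds (s := Set.Ioo (0:ℝ) 1))
      simpa [Real.zero_rpow (by linarith : β - α ≠ 0)] using this
    · filter_upwards [self_mem_nhdsWithin] with t ht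
      exact Real.rpow_pos_of_pos (by linarith [ht.2]) _
  have h3 : Tendsto (fun t : ℝ => ((1 - t) ^ (β - α))⁻¹) (𝓝[Set.Ioo (0:ℝ) 1] 1) atTop :=
    h2.inv_tendsto_nhdsGT_zero
  have := h1.pos_mul_atTop (Real.rpow_pos_of_pos two_pos α) h3
  simpa [div_eq_mul_inv] using this

private lemma val_aux (α β : ℝ) (hα : 0 < α) (hβ : α < β) {t : ℝ} (ht : t ∈ Set.Ioo (0:ℝ) 1) :
    (1 - ‖(t:ℂ)‖ ^ 2) ^ α * ‖(t:ℂ) / ((t:ℂ) * (1 - (t:ℂ)) ^ (β : ℂ))‖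
      = (1 + t) ^ α / (1 - t) ^ (β - α) := by
  obtain ⟨ht0, ht1⟩ := ht
  have h1t : (0:ℝ) < 1 - t := by linarith
  have hz : (t:ℂ) ≠ 0 := by exact_mod_cast ht0.ne'
  have hnorm : ‖(t:ℂ)‖ = t := by simp [abs_of_pos ht0]
  have hcp : (1 - (t:ℂ)) = ((1 - t : ℝ) : ℂ) := by push_cast; ring
  have hnw : ‖(1 - (t:ℂ)) ^ (β : ℂ)‖ = (1 - t) ^ β := by
    rw [hcp, Complex.norm_cpow_eq_rpow_re_of_pos h1t]
    simp
  rw [div_mul_cancel_left₀ hz, norm_inv, hnw, hnorm]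
  have hfac : 1 - t ^ 2 = (1 + t) * (1 - t) := by ring
  rw [hfac, Real.mul_rpow (by linarith) h1t.le, Real.rpow_sub h1t]
  field_simp

/-- Example 2.6: for β > α > 0 the β-Cesàro operator is unbounded on B_α^0,
witnessed by f(z) = z: the Bloch seminorm data of C_β(f) is unbounded, and along
z = t ∈ (0,1) the quantity (1+t)^α/(1-t)^(β-α) tends to ∞ as t → 1⁻. -/
theorem stmt_9 (α β : ℝ) (hα : 0 < α) (hβ : α < β) :
    ¬ BddAbove {c : ℝ | ∃ z ∈ Metric.ball (0:ℂ) 1, z ≠ 0 ∧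
        c = (1 - ‖z‖ ^ 2) ^ α * ‖z / (z * (1 - z) ^ (β : ℂ))‖} ∧
    Filter.Tendsto (fun t : ℝ => (1 + t) ^ α / (1 - t) ^ (β - α))
      (nhdsWithin 1 (Set.Ioo (0:ℝ) 1)) Filter.atTop := by
  have htend := tend_aux α β hα hβ
  refine ⟨?_, htend⟩
  rintro ⟨M, hM⟩
  have hne : (𝓝[Set.Ioo (0:ℝ) 1] 1).NeBot := right_nhdsWithin_Ioo_neBot one_pos
  have hev := htend.eventually (eventually_gt_atTop M)
  obtain ⟨t, hgt, ht⟩ := (hev.and self_mem_nhdsWithin).exists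
  have hmem : (1 + t) ^ α / (1 - t) ^ (β - α) ∈
      {c : ℝ | ∃ z ∈ Metric.ball (0:ℂ) 1, z ≠ 0 ∧
        c = (1 - ‖z‖ ^ 2) ^ α * ‖z / (z * (1 - z) ^ (β : ℂ))‖} := by
    refine ⟨(t:ℂ), ?_, by exact_mod_cast ht.1.ne', (val_aux α β hα hβ ht).symm⟩
    have hn : ‖(t:ℂ)‖ = t := by simp [abs_of_pos ht.1]
    rw [Metric.mem_ball, dist_zero_right, hn]; exact ht.2
  exact absurd (hM hmem) (not_le.mpr hgt)
end

section
/- Let α ≥ 1 and β ≥ α. The function f(z) = Log(1-z) (principal branch) belongs to B_α^0, and sup over t ∈ (0,1) of (1-t^2)^α |log(1-t)| / (t(1-t)^β) is infinite. Hence the β-Cesàro operator is unbounded on B_α^0 for β ≥ α ≥ 1. -/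
/-- Example 2.7: f(z) = Log(1-z) lies in B_α^0 for α ≥ 1, but for β ≥ α the quantity
(1-t²)^α |log(1-t)|/(t(1-t)^β) is unbounded over t ∈ (0,1); hence the β-Cesàro
operator is unbounded on B_α^0 for β ≥ α ≥ 1. -/
theorem stmt_10 (α β : ℝ) (hα : 1 ≤ α) (hβ : α ≤ β) :
    DifferentiableOn ℂ (fun z : ℂ => Complex.log (1 - z)) (Metric.ball (0:ℂ) 1) ∧
    Complex.log (1 - (0:ℂ)) = 0 ∧
    BddAbove {c : ℝ | ∃ z ∈ Metric.ball (0:ℂ) 1,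
      c = (1 - ‖z‖ ^ 2) ^ α * ‖deriv (fun w : ℂ => Complex.log (1 - w)) z‖} ∧
    ¬ BddAbove {c : ℝ | ∃ t ∈ Set.Ioo (0:ℝ) 1,
      c = (1 - t ^ 2) ^ α * |Real.log (1 - t)| / (t * (1 - t) ^ β)} := by
  have hre : ∀ z : ℂ, z ∈ Metric.ball (0:ℂ) 1 → 0 < (1 - z).re := by
    intro z hz
    have hz1 : ‖z‖ < 1 := by simpa using hz
    have h2 : |z.re| ≤ ‖z‖ := by
      simpa using Complex.abs_re_le_norm z
    have := abs_le.mp h2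
    simp only [Complex.sub_re, Complex.one_re]
    linarith
  have hd : ∀ z : ℂ, z ∈ Metric.ball (0:ℂ) 1 →
      HasDerivAt (fun w : ℂ => Complex.log (1 - w)) (-(1 - z)⁻¹) z := by
    intro z hz
    have h1 : HasDerivAt (fun w : ℂ => 1 - w) (-1) z := by
      simpa using (hasDerivAt_id z).const_sub 1
    have h2 : HasDerivAt Complex.log (1 - z)⁻¹ (1 - z) :=
      Complex.hasDerivAt_log (Or.inl (hre z hz))
    have := h2.comp z h1
    simpa [mul_comm, Function.comp_def] using this
  refine ⟨?_, by simp, ?_, ?_⟩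
  · intro z hz
    exact (hd z hz).differentiableAt.differentiableWithinAt
  · refine ⟨2, fun c hc => ?_⟩
    obtain ⟨z, hz, rfl⟩ := hc
    have hz1 : ‖z‖ < 1 := by simpa using hz
    have hz0 : 0 ≤ ‖z‖ := norm_nonneg z
    rw [(hd z hz).deriv]
    have hnorm : ‖-(1 - z)⁻¹‖ = ‖(1:ℂ) - z‖⁻¹ := by
      rw [norm_neg, norm_inv]
    rw [hnorm]
    have hlb : 1 - ‖z‖ ≤ ‖(1:ℂ) - z‖ := by
      have := norm_sub_norm_le (1:ℂ) z
      simpa using this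
    have h1z : 0 < 1 - ‖z‖ := by linarith
    have hinv : ‖(1:ℂ) - z‖⁻¹ ≤ (1 - ‖z‖)⁻¹ :=
      inv_anti₀ h1z hlb
    have hsq : 0 < 1 - ‖z‖ ^ 2 := by nlinarith
    have hsq1 : 1 - ‖z‖ ^ 2 ≤ 1 := by nlinarith
    have hpow : (1 - ‖z‖ ^ 2) ^ α ≤ 1 - ‖z‖ ^ 2 := by
      have := Real.rpow_le_rpow_of_exponent_ge hsq hsq1 hα
      simpa using this
    have hmul : (1 - ‖z‖ ^ 2) ^ α * ‖(1:ℂ) - z‖⁻¹ ≤ (1 - ‖z‖ ^ 2) * (1 - ‖z‖)⁻¹ :=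
      mul_le_mul hpow hinv (by positivity) (le_of_lt hsq)
    refine le_trans hmul ?_
    rw [← div_eq_mul_inv, div_le_iff₀ h1z]
    nlinarith
  · rw [not_bddAbove_iff]
    intro x
    obtain ⟨n, hn⟩ := exists_nat_gt (max x 1)
    have hn1 : (1:ℝ) ≤ n := le_trans (le_max_right x 1) hn.le
    have hxn : x < n := lt_of_le_of_lt (le_max_left x 1) hn
    set t : ℝ := 1 - Real.exp (-(n:ℝ)) with ht_def
    have hexp_pos : 0 < Real.exp (-(n:ℝ)) := Real.exp_pos _
    have hexp_lt : Real.exp (-(n:ℝ)) < 1 := by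
      rw [Real.exp_lt_one_iff]; linarith
    have ht0 : 0 < t := by simp only [ht_def]; linarith
    have ht1 : t < 1 := by simp only [ht_def]; linarith
    have h1t : 1 - t = Real.exp (-(n:ℝ)) := by simp [ht_def]
    have h1tpos : 0 < 1 - t := by linarith
    have hlog : |Real.log (1 - t)| = n := by
      rw [h1t, Real.log_exp, abs_neg, abs_of_nonneg (by positivity)]
    refine ⟨(1 - t ^ 2) ^ α * |Real.log (1 - t)| / (t * (1 - t) ^ β),
      ⟨t, ⟨ht0, ht1⟩, rfl⟩, ?_⟩
    have hden : 0 < t * (1 - t) ^ β := by positivity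
    have hkey : t * (1 - t) ^ β ≤ (1 - t ^ 2) ^ α := by
      have e1 : (1 - t ^ 2) = (1 - t) * (1 + t) := by ring
      have step1 : t * (1 - t) ^ β ≤ (1 - t) ^ β :=
        mul_le_of_le_one_left (by positivity) ht1.le
      have step2 : (1 - t) ^ β ≤ (1 - t) ^ α :=
        Real.rpow_le_rpow_of_exponent_ge h1tpos (by linarith) hβ
      have step3 : (1 - t) ^ α ≤ (1 - t) ^ α * (1 + t) ^ α := by
        refine le_mul_of_one_le_right (by positivity) ?_
        exact Real.one_le_rpow (by linarith) (by linarith)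
      rw [e1, Real.mul_rpow h1tpos.le (by linarith)]
      calc t * (1 - t) ^ β ≤ (1 - t) ^ β := step1
        _ ≤ (1 - t) ^ α := step2
        _ ≤ (1 - t) ^ α * (1 + t) ^ α := step3
    rw [hlog]
    have hge : (n:ℝ) ≤ (1 - t ^ 2) ^ α * n / (t * (1 - t) ^ β) := by
      rw [le_div_iff₀ hden]
      calc (n:ℝ) * (t * (1 - t) ^ β) ≤ n * (1 - t ^ 2) ^ α :=
            mul_le_mul_of_nonneg_left hkey (by positivity)
        _ = (1 - t ^ 2) ^ α * n := mul_comm _ _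
    linarith
end

section
/- For α > 0, the function f(z) = z/(1-z)^α belongs to B_{α+1}^0, and for β > 1, sup over t ∈ (0,1) of (1-t^2)^{α+1} / ((1-t)^{α+β}) = sup (1+t)^{α+1}/(1-t)^{β-1} is infinite. Hence the β-Cesàro operator is unbounded on B_{α+1}^0 for β > 1. -/
open Complex Metric Set

private lemma re_pos_of_ball (z : ℂ) (hz : z ∈ Metric.ball (0:ℂ) 1) : 0 < (1 - z).re := by
  simp only [Metric.mem_ball, dist_zero_right] at hz
  have : |z.re| ≤ ‖z‖ := Complex.abs_re_le_norm z
  simp only [Complex.sub_re, Complex.one_re]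
  cases abs_le.1 this with
  | intro h1 h2 => linarith

private lemma hasDeriv_key (α : ℝ) (z : ℂ) (hz : z ∈ Metric.ball (0:ℂ) 1) :
    HasDerivAt (fun w : ℂ => w / (1 - w) ^ (α : ℂ))
      ((1 * (1 - z) ^ (α : ℂ) - z * ((α : ℂ) * (1 - z) ^ ((α : ℂ) - 1) * (-1))) /
        ((1 - z) ^ (α : ℂ)) ^ 2) z := by
  have hre := re_pos_of_ball z hz
  have hslit : (1 - z) ∈ Complex.slitPlane := Complex.mem_slitPlane_iff.2 (Or.inl hre)
  have hd : HasDerivAt (fun w : ℂ => (1 - w) ^ (α : ℂ))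
      ((α : ℂ) * (1 - z) ^ ((α : ℂ) - 1) * (-1)) z := by
    have h1 : HasDerivAt (fun w : ℂ => 1 - w) (-1) z := by
      simpa using (hasDerivAt_id z).const_sub (1:ℂ)
    exact h1.cpow_const hslit
  have hne : (1 - z) ^ (α : ℂ) ≠ 0 := by
    simp [Complex.cpow_eq_zero_iff, Complex.slitPlane_ne_zero hslit]
  exact (hasDerivAt_id z).div hd hne

/-- Example 2.8: f(z) = z/(1-z)^α lies in B_{α+1}^0, but for β > 1 the quantity
(1+t)^(α+1)/(1-t)^(β-1) is unbounded over t ∈ (0,1); hence the β-Cesàro operator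
is unbounded on B_{α+1}^0 for β > 1. -/
theorem stmt_11 (α β : ℝ) (hα : 0 < α) (hβ : 1 < β) :
    DifferentiableOn ℂ (fun z : ℂ => z / (1 - z) ^ (α : ℂ)) (Metric.ball (0:ℂ) 1) ∧
    (fun z : ℂ => z / (1 - z) ^ (α : ℂ)) 0 = 0 ∧
    BddAbove {c : ℝ | ∃ z ∈ Metric.ball (0:ℂ) 1,
      c = (1 - ‖z‖ ^ 2) ^ (α + 1) * ‖deriv (fun w : ℂ => w / (1 - w) ^ (α : ℂ)) z‖} ∧
    ¬ BddAbove {c : ℝ | ∃ t ∈ Set.Ioo (0:ℝ) 1,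
      c = (1 + t) ^ (α + 1) / (1 - t) ^ (β - 1)} := by
  refine ⟨?_, ?_, ?_, ?_⟩
  · intro z hz
    exact (hasDeriv_key α z hz).differentiableAt.differentiableWithinAt
  · simp
  · -- boundedness
    refine ⟨2 ^ (α + 1) * (2 + α), ?_⟩
    rintro c ⟨z, hz, rfl⟩
    have hz' : ‖z‖ < 1 := by simpa [dist_zero_right] using hz
    have hzn : 0 ≤ ‖z‖ := norm_nonneg z
    have hne : (1 : ℂ) - z ≠ 0 := by
      have := re_pos_of_ball z hz
      intro h; rw [h] at this; simp at this
    set r := ‖(1 : ℂ) - z‖ with hrdef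
    have hr : 0 < r := norm_pos_iff.2 hne
    have hr2 : r ≤ 2 := by
      calc r ≤ ‖(1:ℂ)‖ + ‖z‖ := norm_sub_le _ _
        _ = 1 + ‖z‖ := by rw [norm_one]
        _ ≤ 2 := by linarith
    have hr1 : 1 - ‖z‖ ≤ r := by
      have := norm_sub_norm_le (1 : ℂ) z
      simpa using this
    have hA : ‖(1 - z) ^ (α : ℂ)‖ = r ^ α := by
      rw [Complex.norm_cpow_real]
    have hB : ‖(1 - z) ^ ((α : ℂ) - 1)‖ = r ^ (α - 1) := by
      have h : ((α : ℂ) - 1) = ((α - 1 : ℝ) : ℂ) := by push_cast; ring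
      rw [h, Complex.norm_cpow_real]
    have hderiv : deriv (fun w : ℂ => w / (1 - w) ^ (α : ℂ)) z
        = (1 * (1 - z) ^ (α : ℂ) - z * ((α : ℂ) * (1 - z) ^ ((α : ℂ) - 1) * (-1))) /
          ((1 - z) ^ (α : ℂ)) ^ 2 := (hasDeriv_key α z hz).deriv
    have hnum : ‖(1:ℂ) * (1 - z) ^ (α : ℂ) - z * ((α : ℂ) * (1 - z) ^ ((α : ℂ) - 1) * (-1))‖
        ≤ r ^ α + α * r ^ (α - 1) := by
      have he : (1:ℂ) * (1 - z) ^ (α : ℂ) - z * ((α : ℂ) * (1 - z) ^ ((α : ℂ) - 1) * (-1))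
          = (1 - z) ^ (α : ℂ) + (α : ℂ) * (z * (1 - z) ^ ((α : ℂ) - 1)) := by ring
      rw [he]
      calc ‖(1 - z) ^ (α : ℂ) + (α : ℂ) * (z * (1 - z) ^ ((α : ℂ) - 1))‖
          ≤ ‖(1 - z) ^ (α : ℂ)‖ + ‖(α : ℂ) * (z * (1 - z) ^ ((α : ℂ) - 1))‖ := norm_add_le _ _
        _ = r ^ α + α * (‖z‖ * r ^ (α - 1)) := by
            rw [hA, norm_mul, norm_mul, hB, Complex.norm_real, Real.norm_eq_abs,
              abs_of_pos hα]
        _ ≤ r ^ α + α * r ^ (α - 1) := by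
            have hBnn : (0:ℝ) ≤ r ^ (α - 1) := (Real.rpow_pos_of_pos hr _).le
            have := mul_le_of_le_one_left hBnn hz'.le
            nlinarith
    have hDle : ‖deriv (fun w : ℂ => w / (1 - w) ^ (α : ℂ)) z‖
        ≤ (r ^ α + α * r ^ (α - 1)) / (r ^ α) ^ 2 := by
      rw [hderiv, norm_div, norm_pow, hA]
      have hpos : (0:ℝ) < (r ^ α) ^ 2 := by positivity
      gcongr
    have hstep1 : (1 - ‖z‖ ^ 2) ^ (α + 1) ≤ (2 * r) ^ (α + 1) := by
      apply Real.rpow_le_rpow (by nlinarith) (by nlinarith) (by linarith)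
    have hstep2 : (1 - ‖z‖ ^ 2) ^ (α + 1) * ‖deriv (fun w : ℂ => w / (1 - w) ^ (α : ℂ)) z‖
        ≤ (2 * r) ^ (α + 1) * ((r ^ α + α * r ^ (α - 1)) / (r ^ α) ^ 2) :=
      mul_le_mul hstep1 hDle (norm_nonneg _) (Real.rpow_nonneg (by linarith) _)
    have hstep3 : (2 * r) ^ (α + 1) * ((r ^ α + α * r ^ (α - 1)) / (r ^ α) ^ 2)
        = 2 ^ (α + 1) * (r + α) := by
      rw [Real.mul_rpow (by norm_num) hr.le]
      have e1 : r ^ (α + 1) = r ^ α * r := by rw [Real.rpow_add hr, Real.rpow_one]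
      have e2 : r ^ (α - 1) = r ^ α / r := by rw [Real.rpow_sub hr, Real.rpow_one]
      have hx : r ^ α ≠ 0 := (Real.rpow_pos_of_pos hr α).ne'
      rw [e1, e2]
      field_simp
    have hfin : 2 ^ (α + 1) * (r + α) ≤ 2 ^ (α + 1) * (2 + α) := by
      have h2 : (0:ℝ) ≤ 2 ^ (α + 1) := Real.rpow_nonneg (by norm_num) _
      nlinarith
    linarith [hstep2, hstep3 ▸ hstep2]
  · -- unboundedness
    rintro ⟨M, hM⟩
    have hb : 0 < β - 1 := by linarith
    set M' := max M 1 with hM'def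
    have hM'1 : (1:ℝ) ≤ M' := le_max_right _ _
    have hM'pos : (0:ℝ) < M' + 1 := by linarith
    have hbase0 : (0:ℝ) < 1 / (M' + 1) := by positivity
    have hbase1 : 1 / (M' + 1) < 1 := by rw [div_lt_one hM'pos]; linarith
    set ε := (1 / (M' + 1)) ^ ((β - 1)⁻¹) with hεdef
    have hε0 : 0 < ε := Real.rpow_pos_of_pos hbase0 _
    have hε1 : ε < 1 := Real.rpow_lt_one hbase0.le hbase1 (by positivity)
    have hεβ : ε ^ (β - 1) = 1 / (M' + 1) := by
      rw [hεdef, ← Real.rpow_mul hbase0.le, inv_mul_cancel₀ hb.ne', Real.rpow_one]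
    have hmem : (1 + (1 - ε)) ^ (α + 1) / (1 - (1 - ε)) ^ (β - 1) ∈
        {c : ℝ | ∃ t ∈ Set.Ioo (0:ℝ) 1, c = (1 + t) ^ (α + 1) / (1 - t) ^ (β - 1)} :=
      ⟨1 - ε, ⟨by linarith, by linarith⟩, rfl⟩
    have hle := hM hmem
    have hd : (1:ℝ) - (1 - ε) = ε := by ring
    rw [hd, hεβ, one_div, div_inv_eq_mul] at hle
    have h1 : (1:ℝ) ≤ (1 + (1 - ε)) ^ (α + 1) := by
      calc (1:ℝ) = 1 ^ (α + 1) := (Real.one_rpow _).symm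
        _ ≤ (1 + (1 - ε)) ^ (α + 1) :=
          Real.rpow_le_rpow (by norm_num) (by linarith) (by linarith)
    have : M' + 1 ≤ (1 + (1 - ε)) ^ (α + 1) * (M' + 1) :=
      le_mul_of_one_le_left hM'pos.le h1
    have hMM' : M ≤ M' := le_max_left _ _
    linarith
end

section
/- Let α > 0 and let g be a bounded analytic function on the unit disk. The generalized Alexander operator C_g(f)(z) = ∫_0^z f(w)g(w)/w dw is a compact linear operator from B_α^0 to B_α^0: for every sequence (f_m) in B_α^0 with ‖f_m‖_{B_α} ≤ M for all m and f_m → 0 uniformly on compact subsets of D, one has ‖C_g(f_m)‖_{B_α} → 0. -/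
open Filter

set_option maxHeartbeats 1600000 in
/-- Theorem 3.3: the generalized Alexander operator C_g(f)(z) = ∫_0^z f(w)g(w)/w dw
(with g bounded analytic) is compact on B_α^0: for every norm-bounded sequence (f_m)
converging to 0 uniformly on compact subsets, the Bloch seminorm of C_g(f_m)
(the sup of (1-|z|²)^α |f_m(z)g(z)/z|) tends to 0. -/
theorem stmt_13 (α M C : ℝ) (hα : 0 < α) (g : ℂ → ℂ)
    (hg : DifferentiableOn ℂ g (Metric.ball (0:ℂ) 1))
    (hgb : ∀ z ∈ Metric.ball (0:ℂ) 1, ‖g z‖ ≤ C)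
    (F : ℕ → ℂ → ℂ)
    (hF : ∀ m, DifferentiableOn ℂ (F m) (Metric.ball (0:ℂ) 1))
    (hF0 : ∀ m, F m 0 = 0)
    (hFM : ∀ m, ∀ z ∈ Metric.ball (0:ℂ) 1, (1 - ‖z‖ ^ 2) ^ α * ‖deriv (F m) z‖ ≤ M)
    (hconv : ∀ K ⊆ Metric.ball (0:ℂ) 1, IsCompact K →
      TendstoUniformlyOn F 0 atTop K) :
    Tendsto (fun m => sSup {c : ℝ | ∃ z ∈ Metric.ball (0:ℂ) 1, z ≠ 0 ∧
      c = (1 - ‖z‖ ^ 2) ^ α * ‖F m z * g z / z‖}) atTop (nhds 0) := by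
  have hC0 : 0 ≤ C := le_trans (norm_nonneg _) (hgb 0 (by simp))
  have hM0 : 0 ≤ M := by
    have h := hFM 0 0 (by simp)
    simp only [norm_zero, ne_eq, OfNat.ofNat_ne_zero, not_false_eq_true, zero_pow, sub_zero,
      Real.one_rpow, one_mul] at h
    exact le_trans (norm_nonneg _) h
  -- uniform derivative bound
  have hderiv : ∀ m, ∀ s : ℝ, s < 1 → ∀ w : ℂ, ‖w‖ ≤ s →
      ‖deriv (F m) w‖ ≤ M / (1 - s ^ 2) ^ α := by
    intro m s hs w hw
    have hs0 : 0 ≤ s := le_trans (norm_nonneg w) hw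
    have hw1 : ‖w‖ < 1 := lt_of_le_of_lt hw hs
    have hw2 : ‖w‖ ^ 2 ≤ s ^ 2 := pow_le_pow_left₀ (norm_nonneg w) hw 2
    have h1 : (0:ℝ) < 1 - s ^ 2 := by nlinarith
    have h2 : (0:ℝ) < 1 - ‖w‖ ^ 2 := by nlinarith [norm_nonneg w]
    have h3 : (1 - s ^ 2) ^ α ≤ (1 - ‖w‖ ^ 2) ^ α :=
      Real.rpow_le_rpow h1.le (by linarith) hα.le
    have h4 := hFM m w (mem_ball_zero_iff.2 hw1)
    have h5 : (0:ℝ) < (1 - s ^ 2) ^ α := Real.rpow_pos_of_pos h1 α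
    rw [le_div_iff₀ h5]
    calc ‖deriv (F m) w‖ * (1 - s ^ 2) ^ α
        ≤ ‖deriv (F m) w‖ * (1 - ‖w‖ ^ 2) ^ α :=
          mul_le_mul_of_nonneg_left h3 (norm_nonneg _)
      _ ≤ M := by rw [mul_comm]; exact h4
  rw [Metric.tendsto_atTop]
  intro ε hε
  set r : ℝ := max (1/2) (1 - ε / (8 * (C * M + 1))) with hrdef
  have hr0 : (1:ℝ)/2 ≤ r := le_max_left _ _
  have hεcm : 0 < ε / (8 * (C * M + 1)) := by positivity
  have hr1 : r < 1 := max_lt (by norm_num) (by linarith)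
  have hrpos : (0:ℝ) < r := by linarith
  have hrM : C * M * (1 - r) ≤ ε / 8 := by
    have h : 1 - r ≤ ε / (8 * (C * M + 1)) := by
      have := le_max_right (1/2 : ℝ) (1 - ε / (8 * (C * M + 1))); linarith
    have hcm : (0:ℝ) < C * M + 1 := by positivity
    have h2 : C * M * (1 - r) ≤ C * M * (ε / (8 * (C * M + 1))) :=
      mul_le_mul_of_nonneg_left h (by positivity)
    have heq : C * M * (ε / (8 * (C * M + 1))) = ε * (C * M) / (8 * (C * M + 1)) := by
      ring
    have h3 : ε * (C * M) / (8 * (C * M + 1)) ≤ ε / 8 := by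
      rw [div_le_div_iff₀ (by positivity) (by norm_num)]
      nlinarith [mul_nonneg hC0 hM0]
    linarith [heq ▸ h2]
  set r' : ℝ := (r + 1) / 2 with hr'def
  have hrr' : r < r' := by rw [hr'def]; linarith
  have hr'1 : r' < 1 := by rw [hr'def]; linarith
  have hr'half : (1:ℝ)/2 ≤ r' := by rw [hr'def]; linarith
  have hr'pos : (0:ℝ) < r' := by linarith
  set δ : ℝ := ε / (16 * (C + 1)) with hδdef
  have hδpos : 0 < δ := by positivity
  have hδC : C * δ ≤ ε / 16 := by
    have heq : C * δ = ε * C / (16 * (C + 1)) := by rw [hδdef]; ring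
    rw [heq, div_le_div_iff₀ (by positivity) (by norm_num)]
    nlinarith
  -- uniform smallness on the closed ball of radius r'
  have hK : Metric.closedBall (0:ℂ) r' ⊆ Metric.ball 0 1 :=
    Metric.closedBall_subset_ball hr'1
  have hTU := hconv _ hK (isCompact_closedBall _ _)
  rw [Metric.tendstoUniformlyOn_iff] at hTU
  obtain ⟨N, hN⟩ := eventually_atTop.1 (hTU δ hδpos)
  refine ⟨N, fun m hm => ?_⟩
  have hsmall : ∀ w ∈ Metric.closedBall (0:ℂ) r', ‖F m w‖ ≤ δ := by
    intro w hw
    have h := (hN m hm w hw).le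
    simpa using h
  -- bound each element of the set by ε/2
  have hbound : ∀ c ∈ {c : ℝ | ∃ z ∈ Metric.ball (0:ℂ) 1, z ≠ 0 ∧
      c = (1 - ‖z‖ ^ 2) ^ α * ‖F m z * g z / z‖}, c ≤ ε / 2 := by
    rintro c ⟨z, hz, hz0, rfl⟩
    have hz1 : ‖z‖ < 1 := mem_ball_zero_iff.1 hz
    have hzpos : 0 < ‖z‖ := norm_pos_iff.2 hz0
    have hx : (0:ℝ) < 1 - ‖z‖ ^ 2 := by nlinarith
    set P : ℝ := (1 - ‖z‖ ^ 2) ^ α with hPdef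
    have hP : 0 < P := Real.rpow_pos_of_pos hx α
    have hP1 : P ≤ 1 := Real.rpow_le_one hx.le (by nlinarith [norm_nonneg z]) hα.le
    have hnorm : ‖F m z * g z / z‖ = ‖F m z‖ * ‖g z‖ / ‖z‖ := by
      rw [norm_div, norm_mul]
    have hgz : ‖g z‖ ≤ C := hgb z hz
    rw [hnorm]
    by_cases hcase : ‖z‖ ≤ r
    · -- inner region: Schwarz lemma
      have hd' : DifferentiableOn ℂ (F m) (Metric.ball 0 r') :=
        (hF m).mono (Metric.ball_subset_ball hr'1.le)
      have hmaps : Set.MapsTo (F m) (Metric.ball (0:ℂ) r')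
          (Metric.ball (F m 0) (2 * δ)) := by
        intro w hw
        rw [hF0, Metric.mem_ball, dist_zero_right]
        exact lt_of_le_of_lt (hsmall w (Metric.ball_subset_closedBall hw)) (by linarith)
      have hzball : z ∈ Metric.ball (0:ℂ) r' :=
        mem_ball_zero_iff.2 (lt_of_le_of_lt hcase hrr')
      have hSch := Complex.dist_le_div_mul_dist_of_mapsTo_ball hd' (hmaps.mono_right Metric.ball_subset_closedBall) hzball
      rw [hF0, dist_zero_right, dist_zero_right] at hSch
      -- hSch : ‖F m z‖ ≤ 2 * δ / r' * ‖z‖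
      have h1 : ‖F m z‖ * ‖g z‖ ≤ (2 * δ / r' * ‖z‖) * C :=
        mul_le_mul hSch hgz (norm_nonneg _)
          (mul_nonneg (by positivity) (norm_nonneg _))
      have h2 : ‖F m z‖ * ‖g z‖ / ‖z‖ ≤ (2 * δ / r' * ‖z‖) * C / ‖z‖ :=
        div_le_div_of_nonneg_right h1 hzpos.le
      have h3 : (2 * δ / r' * ‖z‖) * C / ‖z‖ = 2 * δ * C / r' := by
        have halg : ∀ d s t c : ℝ, 0 < s → 0 < t → (2 * d / s * t) * c / t = 2 * d * c / s := by
          intro d s t c hs ht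
          field_simp
        exact halg δ r' ‖z‖ C hr'pos hzpos
      have h4 : 2 * δ * C / r' ≤ 4 * (C * δ) := by
        rw [div_le_iff₀ hr'pos]
        nlinarith [mul_nonneg hC0 hδpos.le]
      have h5 : ‖F m z‖ * ‖g z‖ / ‖z‖ ≤ 4 * (C * δ) := by
        calc ‖F m z‖ * ‖g z‖ / ‖z‖ ≤ (2 * δ / r' * ‖z‖) * C / ‖z‖ := h2
          _ = 2 * δ * C / r' := h3
          _ ≤ 4 * (C * δ) := h4
      have h6 : P * (‖F m z‖ * ‖g z‖ / ‖z‖) ≤ 1 * (4 * (C * δ)) := by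
        apply mul_le_mul hP1 h5 _ (by norm_num)
        positivity
      rw [one_mul] at h6
      linarith
    · -- outer region
      push_neg at hcase
      set a : ℂ := ((r / ‖z‖ : ℝ) : ℂ) * z with hadef
      have hna : ‖a‖ = r := by
        rw [hadef, norm_mul, Complex.norm_real, Real.norm_eq_abs,
          abs_of_nonneg (by positivity), div_mul_cancel₀ _ hzpos.ne']
      have haK : a ∈ Metric.closedBall (0:ℂ) r' := by
        rw [Metric.mem_closedBall, dist_zero_right, hna]; linarith
      have hFa : ‖F m a‖ ≤ δ := hsmall a haK
      have hseg : segment ℝ a z ⊆ Metric.closedBall 0 ‖z‖ :=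
        (convex_closedBall (0:ℂ) ‖z‖).segment_subset
          (by rw [Metric.mem_closedBall, dist_zero_right, hna]; exact hcase.le)
          (by rw [Metric.mem_closedBall, dist_zero_right])
      have hMVT : ‖F m z - F m a‖ ≤ (M / (1 - ‖z‖ ^ 2) ^ α) * ‖z - a‖ := by
        apply Convex.norm_image_sub_le_of_norm_deriv_le
          (fun w hw => (hF m).differentiableAt (Metric.isOpen_ball.mem_nhds
            (mem_ball_zero_iff.2 (lt_of_le_of_lt
              (mem_closedBall_zero_iff.1 (hseg hw)) hz1))))
          (fun w hw => hderiv m ‖z‖ hz1 w (mem_closedBall_zero_iff.1 (hseg hw)))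
          (convex_segment a z) (left_mem_segment ℝ a z) (right_mem_segment ℝ a z)
      have hza : ‖z - a‖ = ‖z‖ - r := by
        have heq : z - a = ((1 - r / ‖z‖ : ℝ) : ℂ) * z := by
          rw [hadef]
          push_cast
          ring
        rw [heq, norm_mul, Complex.norm_real, Real.norm_eq_abs,
          abs_of_nonneg (by rw [sub_nonneg, div_le_one hzpos]; exact hcase.le),
          sub_mul, one_mul, div_mul_cancel₀ _ hzpos.ne']
      rw [hza, ← hPdef] at hMVT
      have hFz : ‖F m z‖ ≤ δ + M / P * (‖z‖ - r) := by
        calc ‖F m z‖ = ‖F m a + (F m z - F m a)‖ := by congr 1; ring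
          _ ≤ ‖F m a‖ + ‖F m z - F m a‖ := norm_add_le _ _
          _ ≤ δ + M / P * (‖z‖ - r) := add_le_add hFa hMVT
      have hzr : ‖z‖ - r ≤ 1 - r := by linarith
      have hzr0 : 0 ≤ ‖z‖ - r := by linarith
      have hMP : 0 ≤ M / P * (‖z‖ - r) := mul_nonneg (by positivity) hzr0
      have h1 : ‖F m z‖ * ‖g z‖ ≤ (δ + M / P * (‖z‖ - r)) * C := by
        apply mul_le_mul hFz hgz (norm_nonneg _)
        linarith
      have h2 : P * (‖F m z‖ * ‖g z‖ / ‖z‖) ≤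
          P * ((δ + M / P * (‖z‖ - r)) * C / ‖z‖) := by
        apply mul_le_mul_of_nonneg_left _ hP.le
        exact div_le_div_of_nonneg_right h1 hzpos.le
      have h3 : P * ((δ + M / P * (‖z‖ - r)) * C / ‖z‖) =
          (P * δ + M * (‖z‖ - r)) * C / ‖z‖ := by
        have halg : ∀ x y u v c p : ℝ, 0 < p → 0 < v →
            p * ((x + y / p * u) * c / v) = (p * x + y * u) * c / v := by
          intro x y u v c p hp hv
          field_simp
        exact halg δ M (‖z‖ - r) ‖z‖ C P hP hzpos
      have hPδ : P * δ ≤ δ := by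
        calc P * δ ≤ 1 * δ := mul_le_mul_of_nonneg_right hP1 hδpos.le
          _ = δ := one_mul _
      have hMz : M * (‖z‖ - r) ≤ M * (1 - r) := mul_le_mul_of_nonneg_left hzr hM0
      have hM1r : 0 ≤ M * (1 - r) := mul_nonneg hM0 (by linarith)
      have h4 : (P * δ + M * (‖z‖ - r)) * C / ‖z‖ ≤ (δ + M * (1 - r)) * C / r := by
        apply div_le_div₀ _ _ hrpos hcase.le
        · apply mul_nonneg _ hC0; linarith
        · apply mul_le_mul_of_nonneg_right _ hC0; linarith
      have hnum : 0 ≤ (δ + M * (1 - r)) * C := mul_nonneg (by linarith) hC0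
      have h5 : (δ + M * (1 - r)) * C / r ≤ 2 * ((δ + M * (1 - r)) * C) := by
        rw [div_le_iff₀ hrpos]
        nlinarith
      have h6 : 2 * ((δ + M * (1 - r)) * C) = 2 * (C * δ) + 2 * (C * M * (1 - r)) := by
        ring
      linarith
  have hnn : ∀ c ∈ {c : ℝ | ∃ z ∈ Metric.ball (0:ℂ) 1, z ≠ 0 ∧
      c = (1 - ‖z‖ ^ 2) ^ α * ‖F m z * g z / z‖}, 0 ≤ c := by
    rintro c ⟨z, hz, hz0, rfl⟩
    have hz1 : ‖z‖ < 1 := mem_ball_zero_iff.1 hz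
    have hx : (0:ℝ) ≤ 1 - ‖z‖ ^ 2 := by nlinarith [norm_nonneg z]
    exact mul_nonneg (Real.rpow_nonneg hx α) (norm_nonneg _)
  have h0 : 0 ≤ sSup {c : ℝ | ∃ z ∈ Metric.ball (0:ℂ) 1, z ≠ 0 ∧
      c = (1 - ‖z‖ ^ 2) ^ α * ‖F m z * g z / z‖} := Real.sSup_nonneg hnn
  have h1 : sSup {c : ℝ | ∃ z ∈ Metric.ball (0:ℂ) 1, z ≠ 0 ∧
      c = (1 - ‖z‖ ^ 2) ^ α * ‖F m z * g z / z‖} ≤ ε / 2 :=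
    Real.sSup_le hbound (by linarith)
  rw [Real.dist_eq, sub_zero, abs_of_nonneg h0]
  linarith
end

section
/- Let α ≥ 1 and let g(w) = Σ_{j=1}^k a_j/(1-b_j w) + h(w), where the b_j are distinct points on the unit circle, a_j ≠ 0, and h is bounded analytic on D, and suppose Re(a_j/g(0)) ≤ 0 for all j and g(0) ≠ 0. Then for each n ∈ ℕ, the number g(0)/n is an eigenvalue of the generalized Cesàro operator C_g(f)(z) = ∫_0^z f(w)g(w)/w dw on B_α^0, with eigenfunction f(z) = z^n ψ_n(z) where ψ_n(z) = exp( (n/g(0)) ∫_0^z (g(w)-g(0))/w dw ). Moreover, any eigenvalue of C_g on B_α^0 is of the form g(0)/n for some n ∈ ℕ. -/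
open Metric NNReal ENNReal

lemma exists_primitive {q : ℂ → ℂ} (hq : DifferentiableOn ℂ q (ball (0:ℂ) 1)) :
    ∃ H : ℂ → ℂ, H 0 = 0 ∧ ∀ z ∈ ball (0:ℂ) 1, HasDerivAt H (q z) z := by
  set p0 := cauchyPowerSeries q 0 ((1/2 : ℝ≥0) : ℝ) with hp0
  have hball : ∀ r : ℝ≥0, (1/2:ℝ≥0) ≤ r → (r:ℝ) < 1 → HasFPowerSeriesOnBall q p0 0 r := by
    intro r h1 h2
    have hr : (0:ℝ≥0) < r := lt_of_lt_of_le (by norm_num) h1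
    have hsub : closedBall (0:ℂ) r ⊆ ball (0:ℂ) 1 := closedBall_subset_ball h2
    have H := (hq.mono hsub).hasFPowerSeriesOnBall hr
    have hd2 : DifferentiableOn ℂ q (closedBall (0:ℂ) ((1/2:ℝ≥0):ℝ)) :=
      hq.mono (closedBall_subset_ball (by norm_num))
    have Hh := hd2.hasFPowerSeriesOnBall (show (0:ℝ≥0) < 1/2 by norm_num)
    have heq := H.hasFPowerSeriesAt.eq_formalMultilinearSeries Hh.hasFPowerSeriesAt
    rw [hp0, ← heq]; exact H
  have hrad : 1 ≤ p0.radius := by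
    refine ENNReal.le_of_forall_nnreal_lt (fun r hr => ?_)
    have hr1 : (r:ℝ) < 1 := by exact_mod_cast hr
    have h2 : ((max r (1/2) : ℝ≥0) : ℝ) < 1 := by
      push_cast; exact max_lt hr1 (by norm_num)
    have := (hball _ (le_max_right _ _) h2).r_le
    exact le_trans (by exact_mod_cast ENNReal.coe_le_coe.2 (le_max_left _ _)) this
  have hq1 : HasFPowerSeriesOnBall q p0 0 1 := by
    refine ⟨hrad, one_pos, fun {y} hy => ?_⟩
    have hy1 : ‖y‖ < 1 := by
      simpa [edist_zero_right, enorm_eq_nnnorm, ← ENNReal.coe_one, ENNReal.coe_lt_coe, ← NNReal.coe_lt_coe]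
        using hy
    obtain ⟨t, ht1, ht2⟩ := exists_between (max_lt hy1 (by norm_num : (1/2:ℝ) < 1))
    have ht0 : (0:ℝ) ≤ t := le_trans (le_max_right _ _) ht1.le |>.trans' (by norm_num)
    have hb := hball ⟨t, ht0⟩ (by
        change ((1/2 : ℝ≥0) : ℝ) ≤ t; push_cast; exact le_trans (le_max_right _ _) ht1.le) (by exact ht2)
    exact hb.hasSum (by
      simp only [Metric.mem_eball, edist_zero_right, enorm_eq_nnnorm, ENNReal.coe_lt_coe]
      exact ENNReal.coe_lt_coe.2 ((NNReal.coe_lt_coe (r₁ := ‖y‖₊) (r₂ := ⟨t, ht0⟩)).1 (by rw [coe_nnnorm y]; exact lt_of_le_of_lt (le_max_left ‖y‖ (1/2:ℝ)) ht1)))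
  set c : ℕ → ℂ := fun m => p0.coeff m with hc
  set P := FormalMultilinearSeries.ofScalars ℂ
    (fun m => if m = 0 then 0 else c (m-1) / m) with hP
  have hPrad : 1 ≤ P.radius := by
    refine ENNReal.le_of_forall_nnreal_lt (fun r hr => ?_)
    have hrlt : (r : ℝ≥0∞) < p0.radius := lt_of_lt_of_le hr hrad
    obtain ⟨C, hC0, hC⟩ := p0.norm_mul_pow_le_of_lt_radius hrlt
    have hr1 : (r:ℝ) ≤ 1 := by
      have : (r:ℝ) < 1 := by exact_mod_cast hr
      exact this.le
    refine P.le_radius_of_bound C (fun n => ?_)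
    rcases n with _ | m
    · simpa [hP, FormalMultilinearSeries.ofScalars_norm] using hC0.le
    · have hco : P.coeff (m+1) = c m / ((m:ℂ)+1) := by
        rw [hP]
        show (FormalMultilinearSeries.ofScalars ℂ _ (m+1)) (fun _ => (1:ℂ)) = _
        rw [FormalMultilinearSeries.ofScalars_apply_eq]
        simp only [Nat.succ_ne_zero, if_false, Nat.add_sub_cancel, one_pow, smul_eq_mul, mul_one]
        push_cast
        ring
      have h1 : ‖P (m+1)‖ = ‖c m / ((m:ℂ)+1)‖ := by
        rw [FormalMultilinearSeries.norm_apply_eq_norm_coef, hco]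
      have h2 : ‖c m / ((m:ℂ)+1)‖ ≤ ‖c m‖ := by
        rw [norm_div]
        apply div_le_self (norm_nonneg _)
        have hn : ‖((m:ℂ)+1)‖ = (m:ℝ)+1 := by
          rw [show ((m:ℂ)+1) = ((m+1:ℕ):ℂ) by push_cast; ring, Complex.norm_natCast]
          push_cast; ring
        rw [hn]
        linarith [Nat.cast_nonneg (α := ℝ) m]
      have h3 : ‖c m‖ = ‖p0 m‖ := FormalMultilinearSeries.norm_apply_eq_norm_coef.symm
      calc ‖P (m+1)‖ * (r:ℝ)^(m+1) ≤ ‖p0 m‖ * (r:ℝ)^(m+1) := by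
            apply mul_le_mul_of_nonneg_right _ (pow_nonneg r.coe_nonneg _)
            rw [h1]; exact h2.trans (le_of_eq h3)
        _ = (‖p0 m‖ * (r:ℝ)^m) * (r:ℝ) := by ring
        _ ≤ C * 1 := mul_le_mul (hC m) hr1 r.coe_nonneg hC0.le
        _ = C := mul_one C
  set H := P.sum with hHdef
  have hPH : HasFPowerSeriesOnBall H P 0 1 :=
    (P.hasFPowerSeriesOnBall (lt_of_lt_of_le one_pos hPrad)).mono one_pos hPrad
  have hmem : ∀ y : ℂ, ‖y‖ < 1 → y ∈ Metric.eball (0:ℂ) 1 := by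
    intro y hy
    simp only [Metric.mem_eball, edist_zero_right, enorm_eq_nnnorm]
    exact_mod_cast hy
  have hH0 : H 0 = 0 := by
    have hs := hPH.hasSum (hmem 0 (by norm_num))
    have : ∀ n, (P n fun _ => (0:ℂ)) = 0 := by
      intro n
      rw [hP, FormalMultilinearSeries.ofScalars_apply_eq]
      rcases n with _ | m <;> simp
    rw [show (0:ℂ) + 0 = 0 by ring] at hs
    simpa using hs.unique (by simpa [this] using hasSum_zero)
  -- derivative on punctured ball
  have hdiff : DifferentiableOn ℂ H (ball (0:ℂ) 1) := by
    intro z hz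
    exact ((hPH.analyticAt_of_mem (by simpa using hmem z (by simpa using hz))).differentiableAt).differentiableWithinAt
  have hderiv_ne : ∀ y : ℂ, y ∈ ball (0:ℂ) 1 → y ≠ 0 → deriv H y = q y := by
    intro y hy hy0
    have hy1 : ‖y‖ < 1 := by simpa using hy
    have hs := (hPH.fderiv).hasSum (hmem y hy1)
    have hs2 := hs.mapL (ContinuousLinearMap.apply ℂ ℂ (1:ℂ))
    have hterm : ∀ n, (ContinuousLinearMap.apply ℂ ℂ (1:ℂ)) (P.derivSeries n fun _ => y)
        = c n * y ^ n := by
      intro n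
      have hdiag := P.derivSeries_apply_diag n y
      have happ : (P.derivSeries n fun _ => y) y = y * (P.derivSeries n fun _ => y) 1 := by
        have := (P.derivSeries n fun _ => y).map_smul y (1:ℂ)
        simpa [smul_eq_mul] using this
      have hPn : (P (n+1) fun _ => y) = (c n / (n+1:ℂ)) * y ^ (n+1) := by
        rw [hP, FormalMultilinearSeries.ofScalars_apply_eq]
        simp [smul_eq_mul]
      have hne : ((n:ℂ)+1) ≠ 0 := by
        have := (Nat.cast_ne_zero (R := ℂ) (n := n+1)).2 (Nat.succ_ne_zero n)
        exact_mod_cast this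
      have : y * (P.derivSeries n fun _ => y) 1 = (n+1:ℂ) * ((c n / (n+1:ℂ)) * y^(n+1)) := by
        rw [← happ, hdiag, hPn]
        push_cast
        simp [smul_eq_mul]
      have h2 : y * (P.derivSeries n fun _ => y) 1 = c n * y^(n+1) := by
        rw [this]; field_simp
      have h3 : (P.derivSeries n fun _ => y) 1 = c n * y ^ n := by
        apply mul_left_cancel₀ hy0
        rw [h2, pow_succ]; ring
      rw [ContinuousLinearMap.apply_apply]; exact h3
    have hs3 : HasSum (fun n => c n * y ^ n) (fderiv ℂ H (0 + y) 1) := by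
      have := hs2
      simp only [hterm] at this
      simpa [ContinuousLinearMap.apply_apply] using this
    have hq2 : HasSum (fun n => c n * y ^ n) (q y) := by
      have := hq1.hasSum (hmem y hy1)
      simp only [FormalMultilinearSeries.apply_eq_pow_smul_coeff, smul_eq_mul,
        zero_add] at this
      convert this using 2 with n
      case e'_3 => rfl
      case e'_5 => ring
    have hfd : fderiv ℂ H (0 + y) 1 = q y := hs3.unique hq2
    rw [← fderiv_apply_one_eq_deriv]
    rw [zero_add] at hfd
    exact hfd
  have hqa : AnalyticOnNhd ℂ q (ball (0:ℂ) 1) := hq.analyticOnNhd isOpen_ball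
  have hHa : AnalyticOnNhd ℂ H (ball (0:ℂ) 1) := hdiff.analyticOnNhd isOpen_ball
  have hDa : AnalyticOnNhd ℂ (deriv H) (ball (0:ℂ) 1) := hHa.deriv
  have hhalf : (1/2 : ℂ) ∈ ball (0:ℂ) 1 := by
    simp only [mem_ball, dist_zero_right]
    rw [show ‖(1/2 : ℂ)‖ = 1/2 by simp]; norm_num
  have hnb : {z : ℂ | z ∈ ball (0:ℂ) 1 ∧ z ≠ 0} ∈ nhds (1/2 : ℂ) := by
    apply (isOpen_ball.inter isOpen_ne).mem_nhds
    exact ⟨hhalf, by norm_num⟩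
  have heq : Set.EqOn (deriv H) q (ball (0:ℂ) 1) := by
    apply hDa.eqOn_of_preconnected_of_eventuallyEq hqa (convex_ball _ _).isPreconnected hhalf
    filter_upwards [hnb] with z hz
    exact hderiv_ne z hz.1 hz.2
  refine ⟨H, hH0, fun z hz => ?_⟩
  have hd : DifferentiableAt ℂ H z := hdiff.differentiableAt (isOpen_ball.mem_nhds hz)
  have := hd.hasDerivAt
  rwa [heq hz] at this

lemma eqOn_of_deriv_eq {F G : ℂ → ℂ} (hF : DifferentiableOn ℂ F (ball (0:ℂ) 1))
    (hG : DifferentiableOn ℂ G (ball (0:ℂ) 1)) (h0 : F 0 = G 0)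
    (hd : ∀ z ∈ ball (0:ℂ) 1, z ≠ 0 → deriv F z = deriv G z) :
    Set.EqOn F G (ball (0:ℂ) 1) := by
  have h0mem : (0:ℂ) ∈ ball (0:ℂ) 1 := by simp
  have hFa : AnalyticOnNhd ℂ (deriv F) (ball (0:ℂ) 1) :=
    (hF.analyticOnNhd isOpen_ball).deriv
  have hGa : AnalyticOnNhd ℂ (deriv G) (ball (0:ℂ) 1) :=
    (hG.analyticOnNhd isOpen_ball).deriv
  have hhalf : (1/2 : ℂ) ∈ ball (0:ℂ) 1 := by
    simp only [mem_ball, dist_zero_right]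
    rw [show ‖(1/2 : ℂ)‖ = 1/2 by simp]; norm_num
  have hnb : {z : ℂ | z ∈ ball (0:ℂ) 1 ∧ z ≠ 0} ∈ nhds (1/2 : ℂ) := by
    apply (isOpen_ball.inter isOpen_ne).mem_nhds
    exact ⟨hhalf, by norm_num⟩
  have heq : Set.EqOn (deriv F) (deriv G) (ball (0:ℂ) 1) := by
    apply hFa.eqOn_of_preconnected_of_eventuallyEq hGa (convex_ball _ _).isPreconnected hhalf
    filter_upwards [hnb] with z hz
    exact hd z hz.1 hz.2
  intro z hz
  have key : ∀ x ∈ ball (0:ℂ) 1,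
      ‖(fun w => F w - G w) x - (fun w => F w - G w) 0‖ ≤ 0 * ‖x - 0‖ := by
    intro x hx
    apply Convex.norm_image_sub_le_of_norm_deriv_le
      (f := fun w => F w - G w)
      (fun y hy => ((hF.differentiableAt (isOpen_ball.mem_nhds hy)).sub
        (hG.differentiableAt (isOpen_ball.mem_nhds hy)))) _ (convex_ball _ _) h0mem hx
    intro y hy
    have hFd := hF.differentiableAt (isOpen_ball.mem_nhds hy)
    have hGd := hG.differentiableAt (isOpen_ball.mem_nhds hy)
    have hder : deriv (fun w => F w - G w) y = deriv F y - deriv G y :=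
      (hFd.hasDerivAt.sub hGd.hasDerivAt).deriv
    rw [hder, heq hy, sub_self, norm_zero]
  have hk := key z hz
  simp only [zero_mul, norm_le_zero_iff, sub_eq_zero] at hk
  simp only [h0, sub_self] at hk
  exact sub_eq_zero.1 hk

set_option maxHeartbeats 2000000 in
/-- Theorem 5.1: point spectrum of the generalized Cesàro operator
C_g(f)(z) = ∫_0^z f(w)g(w)/w dw on B_α^0, α ≥ 1, where
g(w) = Σ_j a_j/(1-b_j w) + h(w) with |b_j| = 1 distinct, a_j ≠ 0, h bounded analytic,
g(0) ≠ 0 and Re(a_j/g(0)) ≤ 0: the eigenvalues are exactly g(0)/n, n ∈ ℕ,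
with eigenfunction z^n ψ_n(z), ψ_n = exp((n/g(0)) ∫_0^z (g(w)-g(0))/w dw).
The operator C_g(f) is encoded as the unique F with F(0)=0, F analytic,
F'(z) = f(z)g(z)/z on the punctured disk. -/
theorem stmt_16 (α : ℝ) (hα : 1 ≤ α) (k : ℕ) (hk : 0 < k)
    (a b : Fin k → ℂ) (hb : ∀ j, ‖b j‖ = 1) (hbinj : Function.Injective b)
    (ha : ∀ j, a j ≠ 0)
    (h : ℂ → ℂ) (hh : DifferentiableOn ℂ h (Metric.ball (0:ℂ) 1))
    (hhb : ∃ C : ℝ, ∀ z ∈ Metric.ball (0:ℂ) 1, ‖h z‖ ≤ C)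
    (g : ℂ → ℂ) (hg : ∀ w ∈ Metric.ball (0:ℂ) 1,
      g w = ∑ j, a j / (1 - b j * w) + h w)
    (hg0 : g 0 ≠ 0) (hre : ∀ j, (a j / g 0).re ≤ 0) :
    (∀ n : ℕ, 0 < n → ∃ ψ : ℂ → ℂ,
      DifferentiableOn ℂ ψ (Metric.ball (0:ℂ) 1) ∧ ψ 0 = 1 ∧
      (∀ z ∈ Metric.ball (0:ℂ) 1, z ≠ 0 →
        deriv ψ z = (n / g 0) * ((g z - g 0) / z) * ψ z) ∧
      DifferentiableOn ℂ (fun z : ℂ => z ^ n * ψ z) (Metric.ball (0:ℂ) 1) ∧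
      BddAbove {c : ℝ | ∃ z ∈ Metric.ball (0:ℂ) 1,
        c = (1 - ‖z‖ ^ 2) ^ α * ‖deriv (fun w : ℂ => w ^ n * ψ w) z‖} ∧
      (∃ z ∈ Metric.ball (0:ℂ) 1, z ^ n * ψ z ≠ 0) ∧
      (∀ F : ℂ → ℂ, F 0 = 0 → DifferentiableOn ℂ F (Metric.ball (0:ℂ) 1) →
        (∀ z ∈ Metric.ball (0:ℂ) 1, z ≠ 0 →
          deriv F z = (z ^ n * ψ z) * g z / z) →
        ∀ z ∈ Metric.ball (0:ℂ) 1, F z = (g 0 / n) * (z ^ n * ψ z))) ∧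
    (∀ (lam : ℂ) (f F : ℂ → ℂ),
      DifferentiableOn ℂ f (Metric.ball (0:ℂ) 1) → f 0 = 0 →
      BddAbove {c : ℝ | ∃ z ∈ Metric.ball (0:ℂ) 1,
        c = (1 - ‖z‖ ^ 2) ^ α * ‖deriv f z‖} →
      (∃ z ∈ Metric.ball (0:ℂ) 1, f z ≠ 0) →
      F 0 = 0 → DifferentiableOn ℂ F (Metric.ball (0:ℂ) 1) →
      (∀ z ∈ Metric.ball (0:ℂ) 1, z ≠ 0 → deriv F z = f z * g z / z) →
      (∀ z ∈ Metric.ball (0:ℂ) 1, lam * f z = F z) →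
      ∃ n : ℕ, 0 < n ∧ lam = g 0 / n) := by
  have h0mem : (0:ℂ) ∈ ball (0:ℂ) 1 := by simp
  have hzn : ∀ z : ℂ, z ∈ ball (0:ℂ) 1 → ‖z‖ < 1 := by
    intro z hz; simpa [mem_ball, dist_zero_right] using hz
  have hne : ∀ (j : Fin k) (z : ℂ), z ∈ ball (0:ℂ) 1 → 1 - b j * z ≠ 0 := by
    intro j z hz hc
    have h2 : b j * z = 1 := by rwa [sub_eq_zero, eq_comm] at hc
    have h1 : ‖b j * z‖ = ‖z‖ := by rw [norm_mul, hb j, one_mul]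
    rw [h2] at h1
    have h3 := hzn z hz
    rw [← h1] at h3
    simp at h3
  have hlow : ∀ (j : Fin k) (z : ℂ), z ∈ ball (0:ℂ) 1 → 1 - ‖z‖ ≤ ‖1 - b j * z‖ := by
    intro j z hz
    have h1 : ‖(1:ℂ)‖ - ‖b j * z‖ ≤ ‖1 - b j * z‖ := norm_sub_norm_le _ _
    rw [norm_one, norm_mul, hb j, one_mul] at h1
    exact h1
  have hup : ∀ (j : Fin k) (z : ℂ), z ∈ ball (0:ℂ) 1 → ‖1 - b j * z‖ ≤ 2 := by
    intro j z hz
    calc ‖1 - b j * z‖ ≤ ‖(1:ℂ)‖ + ‖b j * z‖ := norm_sub_le _ _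
      _ = 1 + ‖z‖ := by rw [norm_one, norm_mul, hb j, one_mul]
      _ ≤ 2 := by linarith [hzn z hz]
  have hslit : ∀ (j : Fin k) (z : ℂ), z ∈ ball (0:ℂ) 1 →
      1 - b j * z ∈ Complex.slitPlane := by
    intro j z hz
    left
    have h1 : (b j * z).re ≤ ‖b j * z‖ := Complex.re_le_norm _
    have h2 : ‖b j * z‖ = ‖z‖ := by rw [norm_mul, hb j, one_mul]
    have h3 := hzn z hz
    simp only [Complex.sub_re, Complex.one_re]
    rw [h2] at h1
    linarith
  obtain ⟨C, hC⟩ := hhb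
  have hC0 : 0 ≤ C := le_trans (norm_nonneg _) (hC 0 h0mem)
  -- differentiability of g
  have hgdiff : DifferentiableOn ℂ g (ball (0:ℂ) 1) := by
    apply DifferentiableOn.congr (f := fun z => ∑ j, a j / (1 - b j * z) + h z) _ hg
    apply DifferentiableOn.add _ hh
    apply DifferentiableOn.fun_sum
    intro j _
    intro z hz
    have hd1 : DifferentiableAt ℂ (fun w : ℂ => 1 - b j * w) z :=
      ((differentiableAt_const (1:ℂ)).fun_sub (differentiableAt_id.const_mul (b j)))
    exact ((differentiableAt_const (a j)).fun_div hd1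
      (hne j z hz)).differentiableWithinAt
  -- the function q = dslope h 0
  set q : ℂ → ℂ := dslope h 0 with hqdef
  have hqd : DifferentiableOn ℂ q (ball (0:ℂ) 1) := by
    intro z hz
    rcases eq_or_ne z 0 with rfl | hz0
    · obtain ⟨p, hp⟩ := hh.analyticAt (isOpen_ball.mem_nhds hz)
      exact hp.has_fpower_series_dslope_fslope.analyticAt.differentiableAt.differentiableWithinAt
    · exact ((differentiableAt_dslope_of_ne hz0).2
        (hh.differentiableAt (isOpen_ball.mem_nhds hz))).differentiableWithinAt
  have hqval : ∀ z : ℂ, z ≠ 0 → q z = (h z - h 0) / z := by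
    intro z hz0
    show dslope h 0 z = (h z - h 0) / z
    rw [dslope_of_ne h hz0, slope_def_field, sub_zero]
  obtain ⟨M, hM0, hM⟩ : ∃ M : ℝ, 0 ≤ M ∧ ∀ z ∈ ball (0:ℂ) 1, ‖q z‖ ≤ M := by
    have hcont : ContinuousOn q (closedBall (0:ℂ) (1/2)) :=
      hqd.continuousOn.mono (closedBall_subset_ball (by norm_num))
    obtain ⟨M1, hM1⟩ := (isCompact_closedBall (0:ℂ) (1/2)).exists_bound_of_continuousOn hcont
    refine ⟨max M1 (8*C), ?_, ?_⟩
    · have := hM1 0 (mem_closedBall_self (by norm_num))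
      exact le_trans (norm_nonneg _) (le_trans this (le_max_left _ _))
    · intro z hz
      rcases le_or_gt ‖z‖ (1/2) with hle | hgt
      · exact le_trans (hM1 z (by simpa [mem_closedBall, dist_zero_right] using hle))
          (le_max_left _ _)
      · have hz0 : z ≠ 0 := by
          intro hc; rw [hc] at hgt; simp at hgt; linarith
        rw [hqval z hz0, norm_div]
        have h1 : ‖h z - h 0‖ ≤ 2 * C := by
          calc ‖h z - h 0‖ ≤ ‖h z‖ + ‖h 0‖ := norm_sub_le _ _
            _ ≤ C + C := add_le_add (hC z hz) (hC 0 h0mem)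
            _ = 2 * C := by ring
        calc ‖h z - h 0‖ / ‖z‖ ≤ (2*C) / (1/2) := by
              apply div_le_div₀ (by linarith) h1 (by norm_num) hgt.le
          _ = 4 * C := by ring
          _ ≤ max M1 (8*C) := le_trans (by linarith) (le_max_right _ _)
  obtain ⟨H, hH0, hHd⟩ := exists_primitive hqd
  have hHb : ∀ z ∈ ball (0:ℂ) 1, ‖H z‖ ≤ M := by
    intro z hz
    have key := Convex.norm_image_sub_le_of_norm_deriv_le (f := H)
      (fun y hy => (hHd y hy).differentiableAt)
      (fun y hy => by rw [(hHd y hy).deriv]; exact hM y hy)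
      (convex_ball _ _) h0mem hz
    rw [hH0, sub_zero, sub_zero] at key
    calc ‖H z‖ ≤ M * ‖z‖ := key
      _ ≤ M * 1 := by
          apply mul_le_mul_of_nonneg_left (hzn z hz).le hM0
      _ = M := mul_one M
  -- the log sum L
  set L : ℂ → ℂ := fun z => ∑ j, a j * Complex.log (1 - b j * z) with hLdef
  have hL0 : L 0 = 0 := by
    simp [hLdef, Complex.log_one]
  have hLd : ∀ z ∈ ball (0:ℂ) 1,
      HasDerivAt L (∑ j, a j * (-(b j) / (1 - b j * z))) z := by
    intro z hz
    apply HasDerivAt.fun_sum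
    intro j _
    have h1 : HasDerivAt (fun w : ℂ => 1 - b j * w) (-(b j)) z := by
      simpa using ((hasDerivAt_id z).const_mul (b j)).const_sub 1
    have h2 := (h1.clog (hslit j z hz)).const_mul (a j)
    exact h2
  set Φ : ℂ → ℂ := fun z => H z - L z with hΦdef
  set D : ℂ → ℂ := fun z => q z + ∑ j, a j * b j / (1 - b j * z) with hDdef
  have hΦd : ∀ z ∈ ball (0:ℂ) 1, HasDerivAt Φ (D z) z := by
    intro z hz
    have h1 := (hHd z hz).sub (hLd z hz)
    have h2 : q z - ∑ j, a j * (-(b j) / (1 - b j * z)) = D z := by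
      rw [hDdef, sub_eq_add_neg, ← Finset.sum_neg_distrib]
      congr 1
      apply Finset.sum_congr rfl
      intro j _
      ring
    rwa [h2] at h1
  have hΦ0 : Φ 0 = 0 := by rw [hΦdef]; simp [hH0, hL0]
  have hkey : ∀ z ∈ ball (0:ℂ) 1, z ≠ 0 → D z = (g z - g 0) / z := by
    intro z hz hz0
    have e1 : g z - g 0 = (∑ j, (a j / (1 - b j * z) - a j)) + (h z - h 0) := by
      rw [hg z hz, hg 0 h0mem, Finset.sum_sub_distrib]
      simp only [mul_zero, sub_zero, div_one]
      ring
    have e2 : ∀ j : Fin k, a j / (1 - b j * z) - a j = z * (a j * b j / (1 - b j * z)) := by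
      intro j
      have h1 := hne j z hz
      field_simp
      ring
    have e3 : g z - g 0 = z * D z := by
      have hDz : D z = q z + ∑ j, a j * b j / (1 - b j * z) := rfl
      rw [e1, hDz, Finset.sum_congr rfl (fun j _ => e2 j), ← Finset.mul_sum,
        hqval z hz0]
      field_simp
      ring
    rw [e3, mul_comm, mul_div_assoc, div_self hz0, mul_one]
  have hA0 : 0 ≤ ∑ j, ‖a j‖ + C := by positivity
  have hgbound : ∀ z ∈ ball (0:ℂ) 1, ‖g z‖ ≤ (∑ j, ‖a j‖ + C) / (1 - ‖z‖) := by
    intro z hz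
    have hz1 := hzn z hz
    have hpos : (0:ℝ) < 1 - ‖z‖ := by linarith
    rw [hg z hz]
    calc ‖∑ j, a j / (1 - b j * z) + h z‖
        ≤ ‖∑ j, a j / (1 - b j * z)‖ + ‖h z‖ := norm_add_le _ _
      _ ≤ ∑ j, ‖a j / (1 - b j * z)‖ + ‖h z‖ := by
          gcongr
          exact norm_sum_le _ _
      _ ≤ ∑ j, ‖a j‖ / (1 - ‖z‖) + C := by
          gcongr with j hj
          · rw [norm_div]
            exact div_le_div_of_nonneg_left (norm_nonneg _) hpos (hlow j z hz)
          · exact hC z hz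
      _ = (∑ j, ‖a j‖) / (1 - ‖z‖) + C := by rw [Finset.sum_div]
      _ ≤ (∑ j, ‖a j‖) / (1 - ‖z‖) + C / (1 - ‖z‖) := by
          gcongr
          rw [le_div_iff₀ hpos]
          nlinarith [norm_nonneg z]
      _ = (∑ j, ‖a j‖ + C) / (1 - ‖z‖) := by rw [← add_div]
  have hweight : ∀ z : ℂ, z ∈ ball (0:ℂ) 1 →
      (1 - ‖z‖ ^ 2) ^ α ≤ 2 * (1 - ‖z‖) := by
    intro z hz
    have hz1 := hzn z hz
    have h1 : (0:ℝ) < 1 - ‖z‖ ^ 2 := by nlinarith [norm_nonneg z]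
    have h2 : 1 - ‖z‖ ^ 2 ≤ 1 := by nlinarith [sq_nonneg ‖z‖]
    have h3 : (1 - ‖z‖ ^ 2) ^ α ≤ (1 - ‖z‖ ^ 2) ^ (1:ℝ) :=
      Real.rpow_le_rpow_of_exponent_ge h1 h2 hα
    rw [Real.rpow_one] at h3
    nlinarith [norm_nonneg z]
  constructor
  · -- Part 1
    intro n hn
    obtain ⟨m, hm⟩ : ∃ m, n = m + 1 := ⟨n - 1, (Nat.succ_pred_eq_of_pos hn).symm⟩
    set lc : ℂ := (n : ℂ) / g 0 with hlcdef
    have hlcg : lc * g 0 = (n : ℂ) := by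
      rw [hlcdef]; field_simp
    set ψ : ℂ → ℂ := fun z => Complex.exp (lc * Φ z) with hψdef
    have hψd : ∀ z ∈ ball (0:ℂ) 1, HasDerivAt ψ (lc * D z * ψ z) z := by
      intro z hz
      have h1 := ((hΦd z hz).const_mul lc).cexp
      convert h1 using 1
      case e'_5 => rfl
      case e'_9 => ring
    have hψdiff : DifferentiableOn ℂ ψ (ball (0:ℂ) 1) :=
      fun z hz => (hψd z hz).differentiableAt.differentiableWithinAt
    have hψ0 : ψ 0 = 1 := by rw [hψdef]; simp [hΦ0]
    have hψderiv : ∀ z ∈ ball (0:ℂ) 1, z ≠ 0 →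
        deriv ψ z = lc * ((g z - g 0) / z) * ψ z := by
      intro z hz hz0
      rw [(hψd z hz).deriv, hkey z hz hz0]
    -- bound on ψ
    set K0 : ℝ := ‖lc‖ * M + ∑ j, ((-(lc * a j).re) * Real.log 2 + |(lc * a j).im| * Real.pi)
      with hK0def
    have hwre : ∀ j : Fin k, (lc * a j).re ≤ 0 := by
      intro j
      have e : lc * a j = (n:ℂ) * (a j / g 0) := by
        rw [hlcdef, div_mul_eq_mul_div, mul_div_assoc]
      rw [e]
      have : ((n:ℂ) * (a j / g 0)).re = (n:ℝ) * (a j / g 0).re := by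
        simp [Complex.mul_re]
      rw [this]
      exact mul_nonpos_of_nonneg_of_nonpos (Nat.cast_nonneg n) (hre j)
    have hψb : ∀ z ∈ ball (0:ℂ) 1, ‖ψ z‖ ≤ Real.exp K0 := by
      intro z hz
      rw [hψdef]
      simp only [Complex.norm_exp]
      apply Real.exp_le_exp.2
      have e1 : lc * Φ z = lc * H z - lc * L z := by rw [hΦdef]; ring
      rw [e1, Complex.sub_re]
      have b1 : (lc * H z).re ≤ ‖lc‖ * M := by
        calc (lc * H z).re ≤ ‖lc * H z‖ := Complex.re_le_norm _
          _ = ‖lc‖ * ‖H z‖ := norm_mul _ _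
          _ ≤ ‖lc‖ * M := mul_le_mul_of_nonneg_left (hHb z hz) (norm_nonneg _)
      have b2 : -(lc * L z).re ≤
          ∑ j, ((-(lc * a j).re) * Real.log 2 + |(lc * a j).im| * Real.pi) := by
        have e2 : lc * L z = ∑ j, (lc * a j) * Complex.log (1 - b j * z) := by
          rw [hLdef, Finset.mul_sum]
          apply Finset.sum_congr rfl
          intro j _
          ring
        rw [e2]
        rw [Complex.re_sum, ← Finset.sum_neg_distrib]
        apply Finset.sum_le_sum
        intro j _
        set w := lc * a j with hw
        set u := 1 - b j * z with hu
        have hure : (w * Complex.log u).re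
            = w.re * (Complex.log u).re - w.im * (Complex.log u).im := Complex.mul_re _ _
        rw [hure]
        have hupos : 0 < ‖u‖ := by
          rw [norm_pos_iff]
          exact hne j z hz
        have hlogre : (Complex.log u).re ≤ Real.log 2 := by
          rw [Complex.log_re]
          exact Real.log_le_log hupos (by simpa using hup j z hz)
        have himb : w.im * (Complex.log u).im ≤ |w.im| * Real.pi := by
          calc w.im * (Complex.log u).im ≤ |w.im * (Complex.log u).im| := le_abs_self _
            _ = |w.im| * |(Complex.log u).im| := abs_mul _ _
            _ ≤ |w.im| * Real.pi := by
                apply mul_le_mul_of_nonneg_left _ (abs_nonneg _)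
                rw [Complex.log_im]
                exact Complex.abs_arg_le_pi u
        have hrew : 0 ≤ -w.re := by linarith [hwre j]
        have hr1 : (-w.re) * (Complex.log u).re ≤ (-w.re) * Real.log 2 :=
          mul_le_mul_of_nonneg_left hlogre hrew
        nlinarith [hr1, himb]
      rw [hK0def]
      have := add_le_add b1 b2
      linarith
    refine ⟨ψ, hψdiff, hψ0, hψderiv, ?_, ?_, ?_, ?_⟩
    · -- differentiability of z^n ψ
      intro z hz
      exact ((differentiableAt_pow n).mul
        (hψd z hz).differentiableAt).differentiableWithinAt
    · -- BddAbove
      set K := Real.exp K0 with hKdef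
      have hK0' : 0 < K := Real.exp_pos _
      set A := ∑ j, ‖a j‖ + C with hAdef
      have hdval : ∀ z ∈ ball (0:ℂ) 1, HasDerivAt (fun w : ℂ => w ^ n * ψ w)
          ((n:ℂ) * z ^ (n-1) * ψ z + z ^ n * (lc * D z * ψ z)) z := by
        intro z hz
        exact (hasDerivAt_pow n z).mul (hψd z hz)
      have hderval : ∀ z ∈ ball (0:ℂ) 1, z ≠ 0 →
          deriv (fun w : ℂ => w ^ n * ψ w) z = lc * z ^ m * ψ z * g z := by
        intro z hz hz0
        rw [(hdval z hz).deriv, hkey z hz hz0]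
        rw [← hlcg]
        have hmn : n - 1 = m := by omega
        rw [hmn, hm]
        field_simp
        ring
      refine ⟨max (2 * ‖lc‖ * K * A) n, ?_⟩
      rintro x ⟨z, hz, rfl⟩
      rcases eq_or_ne z 0 with rfl | hz0
      · rw [(hdval 0 h0mem).deriv, zero_pow hn.ne', zero_mul, add_zero, norm_zero]
        rw [show ((1:ℝ) - 0 ^ 2) ^ α = 1 by norm_num, one_mul]
        have h3 : ‖(n:ℂ) * (0:ℂ) ^ (n-1) * ψ 0‖ ≤ n := by
          rw [hψ0, mul_one, norm_mul]
          rcases Nat.eq_zero_or_pos (n-1) with h4 | h4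
          · rw [h4, pow_zero, norm_one, mul_one]
            simp
          · rw [zero_pow h4.ne', norm_zero, mul_zero]
            positivity
        exact le_trans h3 (le_max_right _ _)
      · rw [hderval z hz hz0]
        have hz1 := hzn z hz
        have hpos : (0:ℝ) < 1 - ‖z‖ := by linarith
        have w2 : ‖lc * z ^ m * ψ z * g z‖ ≤ ‖lc‖ * K * (A / (1 - ‖z‖)) := by
          rw [norm_mul, norm_mul, norm_mul, norm_pow]
          have hzm : ‖z‖ ^ m ≤ 1 := pow_le_one₀ (norm_nonneg z) hz1.le
          calc ‖lc‖ * ‖z‖ ^ m * ‖ψ z‖ * ‖g z‖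
              ≤ ‖lc‖ * 1 * K * (A / (1 - ‖z‖)) := by
                gcongr
                · exact hψb z hz
                · exact hgbound z hz
            _ = ‖lc‖ * K * (A / (1 - ‖z‖)) := by ring
        calc (1 - ‖z‖ ^ 2) ^ α * ‖lc * z ^ m * ψ z * g z‖
            ≤ (2 * (1 - ‖z‖)) * (‖lc‖ * K * (A / (1 - ‖z‖))) := by
              apply mul_le_mul (hweight z hz) w2 (norm_nonneg _)
              positivity
          _ = 2 * (‖lc‖ * K) * ((1 - ‖z‖) * (A / (1 - ‖z‖))) := by ring
          _ = 2 * ‖lc‖ * K * A := by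
              rw [mul_comm ((1:ℝ) - ‖z‖), div_mul_cancel₀ A hpos.ne']
              ring
          _ ≤ max (2 * ‖lc‖ * K * A) n := le_max_left _ _
    · -- nonvanishing
      refine ⟨1/2, by simp [mem_ball]; norm_num, ?_⟩
      apply mul_ne_zero
      · exact pow_ne_zero _ (by norm_num)
      · exact Complex.exp_ne_zero _
    · -- uniqueness
      intro F hF0 hFd hFder z hz
      have hn0 : (n:ℂ) ≠ 0 := Nat.cast_ne_zero.2 hn.ne'
      set G : ℂ → ℂ := fun z => (g 0 / n) * (z ^ n * ψ z) with hGdef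
      have hGdiff : DifferentiableOn ℂ G (ball (0:ℂ) 1) := by
        intro w hw
        exact (((differentiableAt_pow n).mul
          (hψd w hw).differentiableAt).const_mul _).differentiableWithinAt
      have hG0 : G 0 = 0 := by
        rw [hGdef]; simp [zero_pow hn.ne']
      have hdval : ∀ w ∈ ball (0:ℂ) 1, HasDerivAt (fun w : ℂ => w ^ n * ψ w)
          ((n:ℂ) * w ^ (n-1) * ψ w + w ^ n * (lc * D w * ψ w)) w := by
        intro w hw
        exact (hasDerivAt_pow n w).mul (hψd w hw)
      have hd : ∀ w ∈ ball (0:ℂ) 1, w ≠ 0 → deriv F w = deriv G w := by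
        intro w hw hw0
        have h1 : deriv G w = (g 0 / n) *
            ((n:ℂ) * w ^ (n-1) * ψ w + w ^ n * (lc * D w * ψ w)) :=
          (((hdval w hw).const_mul (g 0 / n))).deriv
        rw [hFder w hw hw0, h1, hkey w hw hw0]
        rw [← hlcg]
        have hmn : n - 1 = m := by omega
        rw [hmn, hm]
        have hlcne : lc ≠ 0 := by
          rw [hlcdef]
          exact div_ne_zero (by exact_mod_cast hn.ne') hg0
        field_simp
        ring
      exact eqOn_of_deriv_eq hFd hGdiff (by rw [hF0, hG0]) hd hz
  · -- Part 2 : converse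
    intro lam f F hf hf0 hbdd hfne hF0 hFd hFder hlf
    obtain ⟨z₀, hz₀B, hz₀⟩ := hfne
    have hfa : AnalyticOnNhd ℂ f (ball (0:ℂ) 1) := hf.analyticOnNhd isOpen_ball
    have hnotall : ∀ z₁ ∈ ball (0:ℂ) 1, ¬ f =ᶠ[nhds z₁] 0 := by
      intro z₁ hz₁ hev
      exact hz₀ (hfa.eqOn_zero_of_preconnected_of_eventuallyEq_zero
        (convex_ball _ _).isPreconnected hz₁ hev hz₀B)
    have hEq : ∀ z ∈ ball (0:ℂ) 1, z ≠ 0 → lam * (z * deriv f z) = f z * g z := by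
      intro z hz hz0
      have h1 : deriv F z = lam * deriv f z := by
        have hev : F =ᶠ[nhds z] fun w => lam * f w := by
          filter_upwards [isOpen_ball.mem_nhds hz] with w hw
          exact (hlf w hw).symm
        rw [hev.deriv_eq]
        exact deriv_const_mul lam (hf.differentiableAt (isOpen_ball.mem_nhds hz))
      have h2 := hFder z hz hz0
      rw [h1, eq_div_iff hz0] at h2
      calc lam * (z * deriv f z) = lam * deriv f z * z := by ring
        _ = f z * g z := h2
    have hgc : ContinuousAt g 0 :=
      (hgdiff.differentiableAt (isOpen_ball.mem_nhds h0mem)).continuousAt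
    have hlam : lam ≠ 0 := by
      intro hc
      have hev : ∀ᶠ w in nhds (0:ℂ), g w ≠ 0 ∧ w ∈ ball (0:ℂ) 1 :=
        (hgc.eventually_ne hg0).and (isOpen_ball.eventually_mem h0mem)
      obtain ⟨δ, hδ0, hδ⟩ := Metric.eventually_nhds_iff.1 hev
      set r : ℝ := min (δ/2) (1/2) with hrdef
      have hr0 : 0 < r := lt_min (by linarith) (by norm_num)
      set z₁ : ℂ := (r : ℂ) with hz₁def
      have hz₁norm : ‖z₁‖ = r := by
        rw [hz₁def, Complex.norm_real, Real.norm_eq_abs, abs_of_pos hr0]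
      have hz₁B : z₁ ∈ ball (0:ℂ) 1 := by
        rw [mem_ball, dist_zero_right, hz₁norm]
        exact lt_of_le_of_lt (min_le_right _ _) (by norm_num)
      apply hnotall z₁ hz₁B
      have hballm : ball z₁ (r/2) ∈ nhds z₁ := ball_mem_nhds _ (by linarith)
      filter_upwards [hballm] with w hw
      have hdist : dist w z₁ < r/2 := hw
      have hw0 : w ≠ 0 := by
        intro hc2
        rw [hc2] at hdist
        rw [dist_comm, dist_zero_right, hz₁norm] at hdist
        linarith
      have hwd : dist w 0 < δ := by
        calc dist w 0 ≤ dist w z₁ + dist z₁ 0 := dist_triangle _ _ _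
          _ < r/2 + r := by
              rw [dist_zero_right, hz₁norm]; linarith
          _ ≤ δ := by
              have hrd : r ≤ δ/2 := min_le_left _ _
              linarith
      obtain ⟨hgw, hwB⟩ := hδ hwd
      have := hEq w hwB hw0
      rw [hc, zero_mul] at this
      have := (mul_eq_zero.1 this.symm).resolve_right hgw
      simpa using this
    -- order analysis at 0
    have hfa0 : AnalyticAt ℂ f 0 := hfa 0 h0mem
    have hord : analyticOrderAt f 0 ≠ ⊤ := by
      intro htop
      apply hnotall 0 h0mem
      have := analyticOrderAt_eq_top.1 htop
      filter_upwards [this] with w hw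
      simpa using hw
    obtain ⟨nn, hnn⟩ := WithTop.ne_top_iff_exists.1 hord
    obtain ⟨u, hu, hu0, huev⟩ := (hfa0.analyticOrderAt_eq_natCast (n := nn)).1 hnn.symm
    have hnn0 : nn ≠ 0 := by
      intro hc
      apply hu0
      have h1 := huev.self_of_nhds
      rw [hc] at h1
      simp only [pow_zero, one_smul, sub_zero] at h1
      rw [hf0] at h1
      exact h1.symm
    have hfev : f =ᶠ[nhds (0:ℂ)] fun z => z ^ nn * u z := by
      filter_upwards [huev] with w hw
      simpa [smul_eq_mul] using hw
    have hud : ∀ᶠ z in nhds (0:ℂ), DifferentiableAt ℂ u z := by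
      filter_upwards [hu.eventually_analyticAt] with w hw
      exact hw.differentiableAt
    have hderiv_ev : deriv f =ᶠ[nhds (0:ℂ)] deriv (fun z : ℂ => z ^ nn * u z) :=
      hfev.deriv
    have hBn : ∀ᶠ z in nhds (0:ℂ), z ∈ ball (0:ℂ) 1 :=
      isOpen_ball.eventually_mem h0mem
    have hkey2 : ∀ᶠ z in nhdsWithin (0:ℂ) {(0:ℂ)}ᶜ,
        lam * ((nn:ℂ) * u z + z * deriv u z) = u z * g z := by
      have hall : ∀ᶠ z in nhdsWithin (0:ℂ) {(0:ℂ)}ᶜ,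
          (f z = z ^ nn * u z ∧ deriv f z = deriv (fun w : ℂ => w ^ nn * u w) z) ∧
          (DifferentiableAt ℂ u z ∧ z ∈ ball (0:ℂ) 1) := by
        apply Filter.Eventually.filter_mono nhdsWithin_le_nhds
        exact (hfev.and hderiv_ev).and (hud.and hBn)
      filter_upwards [hall, self_mem_nhdsWithin] with z hz hz0'
      have hz0 : z ≠ 0 := hz0'
      obtain ⟨⟨he1, he2⟩, hud', hzB⟩ := hz
      have hder : deriv (fun w : ℂ => w ^ nn * u w) z
          = (nn:ℂ) * z ^ (nn-1) * u z + z ^ nn * deriv u z :=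
        ((hasDerivAt_pow nn z).mul hud'.hasDerivAt).deriv
      have heq := hEq z hzB hz0
      rw [he1, he2, hder] at heq
      have hzn' : (z:ℂ) ^ nn ≠ 0 := pow_ne_zero _ hz0
      apply mul_left_cancel₀ hzn'
      obtain ⟨mm, hmm⟩ : ∃ mm, nn = mm + 1 := ⟨nn - 1, (Nat.succ_pred_eq_of_pos
        (Nat.pos_of_ne_zero hnn0)).symm⟩
      calc z ^ nn * (lam * ((nn:ℂ) * u z + z * deriv u z))
          = lam * (z * ((nn:ℂ) * z ^ (nn-1) * u z + z ^ nn * deriv u z)) := by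
            rw [hmm]
            simp only [Nat.add_sub_cancel]
            ring
        _ = z ^ nn * u z * g z := heq
        _ = z ^ nn * (u z * g z) := by ring
    have hucont : ContinuousAt u 0 := hu.continuousAt
    have hu'cont : ContinuousAt (deriv u) 0 := by
      obtain ⟨ρ, hρ0, hρ⟩ := Metric.eventually_nhds_iff.1 hu.eventually_analyticAt
      have hAn : AnalyticOnNhd ℂ u (ball (0:ℂ) ρ) := by
        intro w hw
        exact hρ (by simpa [mem_ball] using hw)
      exact (hAn.deriv 0 (mem_ball_self hρ0)).continuousAt
    have hlim : lam * ((nn:ℂ) * u 0 + 0 * deriv u 0) = u 0 * g 0 := by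
      have tcont : ContinuousAt (fun z : ℂ => lam * ((nn:ℂ) * u z + z * deriv u z)) 0 :=
        continuousAt_const.mul ((continuousAt_const.mul hucont).add
          (continuousAt_id.mul hu'cont))
      have t1 : Filter.Tendsto (fun z : ℂ => lam * ((nn:ℂ) * u z + z * deriv u z))
          (nhdsWithin (0:ℂ) {(0:ℂ)}ᶜ)
          (nhds (lam * ((nn:ℂ) * u 0 + 0 * deriv u 0))) :=
        Filter.Tendsto.mono_left tcont nhdsWithin_le_nhds
      have t2 : Filter.Tendsto (fun z : ℂ => u z * g z)
          (nhdsWithin (0:ℂ) {(0:ℂ)}ᶜ) (nhds (u 0 * g 0)) := by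
        exact Filter.Tendsto.mono_left (hucont.mul hgc) nhdsWithin_le_nhds
      exact tendsto_nhds_unique (t1.congr' hkey2) t2
    have hfin : lam * nn = g 0 := by
      have h1 : (lam * nn - g 0) * u 0 = 0 := by linear_combination hlim
      have h2 := (mul_eq_zero.1 h1).resolve_right hu0
      exact sub_eq_zero.1 h2
    refine ⟨nn, Nat.pos_of_ne_zero hnn0, ?_⟩
    rw [eq_div_iff (Nat.cast_ne_zero.2 hnn0 : (nn:ℂ) ≠ 0)]
    exact hfin
end

section
/- Let α > 0 and let g be a bounded analytic function on the unit disk with g(0) possibly zero. If λ is an eigenvalue of the generalized Alexander operator C_g(f)(z) = ∫_0^z f(w)g(w)/w dw acting on analytic functions f on D vanishing at 0 (with f not identically zero), then λ = g(0)/n for some positive integer n, where n is the order of vanishing of f at 0. -/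
/-- If λ is an eigenvalue of the generalized Alexander operator
C_g(f)(z) = ∫_0^z f(w)g(w)/w dw (g bounded analytic) with eigenfunction
f(z) = z^n ψ(z), ψ(0) ≠ 0, n ≥ 1, then λ = g(0)/n. The operator value C_g(f) is
encoded as a function F with F(0)=0, F analytic on the disk and
F'(z) = f(z)g(z)/z off the origin. -/
theorem stmt_17 (α : ℝ) (hα : 0 < α) (g : ℂ → ℂ)
    (hg : DifferentiableOn ℂ g (Metric.ball (0:ℂ) 1))
    (hgb : ∃ C : ℝ, ∀ z ∈ Metric.ball (0:ℂ) 1, ‖g z‖ ≤ C)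
    (lam : ℂ) (n : ℕ) (hn : 1 ≤ n) (ψ : ℂ → ℂ)
    (hψ : DifferentiableOn ℂ ψ (Metric.ball (0:ℂ) 1)) (hψ0 : ψ 0 ≠ 0)
    (f : ℂ → ℂ) (hf : ∀ z, f z = z ^ n * ψ z)
    (F : ℂ → ℂ) (hF0 : F 0 = 0)
    (hF : DifferentiableOn ℂ F (Metric.ball (0:ℂ) 1))
    (hF' : ∀ z ∈ Metric.ball (0:ℂ) 1, z ≠ 0 → deriv F z = f z * g z / z)
    (heig : ∀ z ∈ Metric.ball (0:ℂ) 1, lam * f z = F z) :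
    lam = g 0 / n := by
  have hball : (0:ℂ) ∈ Metric.ball (0:ℂ) 1 := by simp
  set h : ℂ → ℂ := fun z => lam * ((n:ℂ) * ψ z + z * deriv ψ z) - ψ z * g z with hh
  -- h vanishes on ball minus 0
  have key : ∀ z ∈ Metric.ball (0:ℂ) 1, z ≠ 0 → h z = 0 := by
    intro z hz hz0
    have hψz : DifferentiableAt ℂ ψ z := hψ.differentiableAt (Metric.isOpen_ball.mem_nhds hz)
    have hd1 : HasDerivAt (fun w => lam * f w)
        (lam * ((n:ℂ) * z ^ (n-1) * ψ z + z ^ n * deriv ψ z)) z := by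
      have : HasDerivAt (fun w => w ^ n * ψ w)
          ((n:ℂ) * z ^ (n-1) * ψ z + z ^ n * deriv ψ z) z :=
        (hasDerivAt_pow n z).mul hψz.hasDerivAt
      have := this.const_mul lam
      simpa [hf] using this
    -- deriv equality via eventual equality
    have heq : (fun w => lam * f w) =ᶠ[nhds z] F := by
      filter_upwards [Metric.isOpen_ball.mem_nhds hz] with w hw using heig w hw
    have : lam * ((n:ℂ) * z ^ (n-1) * ψ z + z ^ n * deriv ψ z) = f z * g z / z := by
      rw [← hd1.deriv, heq.deriv_eq, hF' z hz hz0]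
    have hzn : z ^ (n-1) ≠ 0 := pow_ne_zero _ hz0
    have hpow : z ^ n = z ^ (n-1) * z := by
      rw [← pow_succ]; congr 1; omega
    have h2 : z ^ (n-1) * (lam * ((n:ℂ) * ψ z + z * deriv ψ z)) = z ^ (n-1) * (ψ z * g z) := by
      have hfz : f z * g z / z = z ^ (n-1) * (ψ z * g z) := by
        rw [hf, hpow]; field_simp
      rw [← hfz, ← this, hpow]; ring
    have := mul_left_cancel₀ hzn h2
    simp [hh, this, sub_eq_zero]
  -- continuity of h at 0
  have hψan : AnalyticOnNhd ℂ ψ (Metric.ball (0:ℂ) 1) :=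
    hψ.analyticOnNhd Metric.isOpen_ball
  have hdψ : ContinuousAt (deriv ψ) 0 :=
    (hψan.deriv 0 hball).differentiableAt.continuousAt
  have hcont : ContinuousAt h 0 := by
    have hψc : ContinuousAt ψ 0 :=
      (hψ.differentiableAt (Metric.isOpen_ball.mem_nhds hball)).continuousAt
    have hgc : ContinuousAt g 0 :=
      (hg.differentiableAt (Metric.isOpen_ball.mem_nhds hball)).continuousAt
    exact ((continuousAt_const.mul ((continuousAt_const.mul hψc).add
      (continuousAt_id.mul hdψ))).sub (hψc.mul hgc))
  -- h 0 = 0 via punctured limit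
  have hzero : h 0 = 0 := by
    have hev : ∀ᶠ z in nhdsWithin (0:ℂ) {(0:ℂ)}ᶜ, h z = 0 := by
      filter_upwards [self_mem_nhdsWithin,
        nhdsWithin_le_nhds (Metric.isOpen_ball.mem_nhds hball)] with z hz1 hz2
      exact key z hz2 hz1
    have htend : Filter.Tendsto h (nhdsWithin (0:ℂ) {(0:ℂ)}ᶜ) (nhds (h 0)) :=
      hcont.continuousWithinAt.tendsto
    have htend0 : Filter.Tendsto h (nhdsWithin (0:ℂ) {(0:ℂ)}ᶜ) (nhds 0) :=
      Filter.Tendsto.congr' (Filter.EventuallyEq.symm hev) tendsto_const_nhds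
    exact tendsto_nhds_unique htend htend0
  have hn' : (n:ℂ) ≠ 0 := Nat.cast_ne_zero.mpr (by omega)
  have h4 : lam * (n:ℂ) = g 0 := by
    have h5 : lam * ((n:ℂ) * ψ 0 + 0 * deriv ψ 0) - ψ 0 * g 0 = 0 := hzero
    apply mul_right_cancel₀ hψ0
    linear_combination h5
  rw [eq_div_iff hn']
  exact h4
end

section
/- Let g be a bounded analytic function on the unit disk and α > 0. For the normalized functions h_n(z) = z^n/(n·‖z^n/n‖_{B_α}), one has ‖C_g(h_n)‖_{B_α} ≤ ‖g‖_∞ / n, which tends to 0 as n → ∞. Hence 0 is an approximate eigenvalue of C_g on B_α^0. -/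
open Filter

/-- Example 5.3: 0 is an approximate eigenvalue of the generalized Alexander
operator C_g on B_α^0: with h_n(z) = z^n/(n ‖z^n/n‖_{B_α}) of unit norm, the Bloch
seminorm of C_g(h_n), i.e. sup (1-|z|²)^α |h_n(z) g(z)/z|, is at most ‖g‖_∞/n → 0. -/
theorem stmt_18 (α C : ℝ) (hα : 0 < α) (g : ℂ → ℂ)
    (hg : DifferentiableOn ℂ g (Metric.ball (0:ℂ) 1))
    (hgb : ∀ z ∈ Metric.ball (0:ℂ) 1, ‖g z‖ ≤ C) :
    (∀ n : ℕ, 1 ≤ n → ∀ z ∈ Metric.ball (0:ℂ) 1, z ≠ 0 →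
      (1 - ‖z‖ ^ 2) ^ α *
        ‖(z ^ n / (n * (sSup {c : ℝ | ∃ w ∈ Metric.ball (0:ℂ) 1,
            c = (1 - ‖w‖ ^ 2) ^ α * ‖deriv (fun u : ℂ => u ^ n / n) w‖} : ℝ))) *
          g z / z‖ ≤ C / n) ∧
    Tendsto (fun n : ℕ => C / (n : ℝ)) atTop (nhds 0) := by
  constructor
  · intro n hn z hz hz0
    have hnC : (n:ℂ) ≠ 0 := Nat.cast_ne_zero.mpr (by omega)
    have hnR : (0:ℝ) < n := by exact_mod_cast Nat.lt_of_lt_of_le Nat.zero_lt_one hn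
    have hderiv : ∀ w : ℂ, deriv (fun u : ℂ => u ^ n / n) w = w ^ (n-1) := by
      intro w
      rw [deriv_div_const, deriv_pow_field]
      field_simp
    have hsetEq : {c : ℝ | ∃ w ∈ Metric.ball (0:ℂ) 1,
            c = (1 - ‖w‖ ^ 2) ^ α * ‖deriv (fun u : ℂ => u ^ n / n) w‖}
        = {c : ℝ | ∃ w ∈ Metric.ball (0:ℂ) 1,
            c = (1 - ‖w‖ ^ 2) ^ α * ‖w‖ ^ (n-1)} := by
      ext c
      constructor
      · rintro ⟨w, hw, rfl⟩
        exact ⟨w, hw, by rw [hderiv, norm_pow]⟩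
      · rintro ⟨w, hw, rfl⟩
        exact ⟨w, hw, by rw [hderiv, norm_pow]⟩
    set S : ℝ := sSup {c : ℝ | ∃ w ∈ Metric.ball (0:ℂ) 1,
            c = (1 - ‖w‖ ^ 2) ^ α * ‖deriv (fun u : ℂ => u ^ n / n) w‖} with hSdef
    have hSdef' : S = sSup {c : ℝ | ∃ w ∈ Metric.ball (0:ℂ) 1,
            c = (1 - ‖w‖ ^ 2) ^ α * ‖w‖ ^ (n-1)} := by rw [hSdef, hsetEq]
    have hbdd : BddAbove {c : ℝ | ∃ w ∈ Metric.ball (0:ℂ) 1,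
            c = (1 - ‖w‖ ^ 2) ^ α * ‖w‖ ^ (n-1)} := by
      refine ⟨1, ?_⟩
      rintro c ⟨w, hw, rfl⟩
      rw [mem_ball_zero_iff] at hw
      have h0 : (0:ℝ) ≤ 1 - ‖w‖ ^ 2 := by nlinarith [norm_nonneg w]
      have h1 : (1 - ‖w‖ ^ 2) ^ α ≤ 1 :=
        Real.rpow_le_one h0 (by nlinarith [norm_nonneg w]) hα.le
      have h2 : ‖w‖ ^ (n-1) ≤ 1 := pow_le_one₀ (norm_nonneg w) hw.le
      calc (1 - ‖w‖ ^ 2) ^ α * ‖w‖ ^ (n-1) ≤ 1 * 1 :=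
            mul_le_mul h1 h2 (pow_nonneg (norm_nonneg w) _) (by norm_num)
        _ = 1 := by norm_num
    have hle : (1 - ‖z‖ ^ 2) ^ α * ‖z‖ ^ (n-1) ≤ S := by
      rw [hSdef']
      exact le_csSup hbdd ⟨z, hz, rfl⟩
    have hSpos : 0 < S := by
      have hmem : ((1 - ‖(1/2:ℂ)‖ ^ 2) ^ α * ‖(1/2:ℂ)‖ ^ (n-1)) ∈
          {c : ℝ | ∃ w ∈ Metric.ball (0:ℂ) 1,
            c = (1 - ‖w‖ ^ 2) ^ α * ‖w‖ ^ (n-1)} := by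
        refine ⟨(1/2:ℂ), ?_, rfl⟩
        rw [mem_ball_zero_iff]
        norm_num
      have hval : (0:ℝ) < (1 - ‖(1/2:ℂ)‖ ^ 2) ^ α * ‖(1/2:ℂ)‖ ^ (n-1) := by
        have : ‖(1/2:ℂ)‖ = 1/2 := by norm_num
        rw [this]
        positivity
      rw [hSdef']
      exact lt_of_lt_of_le hval (le_csSup hbdd hmem)
    rw [mem_ball_zero_iff] at hz
    have hzpos : 0 < ‖z‖ := norm_pos_iff.mpr hz0
    have hA0 : (0:ℝ) ≤ (1 - ‖z‖ ^ 2) ^ α :=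
      Real.rpow_nonneg (by nlinarith [norm_nonneg z]) α
    have hnorm : ‖(z ^ n / ((n:ℂ) * (S:ℂ))) * g z / z‖
        = ‖z‖ ^ n / (n * S) * ‖g z‖ / ‖z‖ := by
      rw [norm_div, norm_mul, norm_div, norm_mul, norm_pow]
      rw [Complex.norm_natCast, Complex.norm_real, Real.norm_eq_abs, abs_of_pos hSpos]
    have hpow : ‖z‖ ^ n = ‖z‖ ^ (n-1) * ‖z‖ := by
      rw [← pow_succ]
      congr 1
      omega
    have hgz : ‖g z‖ ≤ C := hgb z (mem_ball_zero_iff.mpr hz)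
    have hC0 : 0 ≤ C := le_trans (norm_nonneg _) hgz
    rw [hnorm, hpow]
    have key : (1 - ‖z‖ ^ 2) ^ α * (‖z‖ ^ (n-1) * ‖z‖ / (n * S) * ‖g z‖ / ‖z‖)
        = ((1 - ‖z‖ ^ 2) ^ α * ‖z‖ ^ (n-1)) * ‖g z‖ / (n * S) := by
      have hz' : ‖z‖ ≠ 0 := (norm_pos_iff.mpr hz0).ne'
      field_simp [hz', hSpos.ne', hnR.ne']
    rw [key]
    have h1 : ((1 - ‖z‖ ^ 2) ^ α * ‖z‖ ^ (n-1)) * ‖g z‖ ≤ S * C :=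
      mul_le_mul hle hgz (norm_nonneg _)
        (le_trans (mul_nonneg hA0 (pow_nonneg (norm_nonneg z) _)) hle)
    calc ((1 - ‖z‖ ^ 2) ^ α * ‖z‖ ^ (n-1)) * ‖g z‖ / (n * S)
        ≤ S * C / (n * S) := by
          apply div_le_div_of_nonneg_right h1 (by positivity) |>.trans_eq rfl
      _ = C / n := by field_simp
  · exact tendsto_const_div_atTop_nhds_zero_nat C
end

section
/- For α > 0 and every g ∈ B_α^0, the function f(z) = z(1-z)g'(z) belongs to B_{α+1}^0 and satisfies C_1(f) = g, i.e. g(z) = ∫_0^z f(w)/(w(1-w)) dw. In particular B_α^0 is contained in the range of the Cesàro operator C_1 : B_{α+1}^0 → B_{α+1}^0. The key estimate is sup_{z∈D}(1-|z|^2)^{α+1}|f'(z)| ≤ 3 sup_{z∈D}(1-|z|^2)^α |g'(z)| + 2 sup_{z∈D}(1-|z|^2)^{α+1}|g''(z)| < ∞. -/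
open Metric Set Complex

open Metric Set Complex

lemma cauchy_second (α M : ℝ) (hα : 0 < α) (g : ℂ → ℂ)
    (hg : DifferentiableOn ℂ g (Metric.ball (0:ℂ) 1))
    (hbd : ∀ w ∈ Metric.ball (0:ℂ) 1, (1 - ‖w‖ ^ 2) ^ α * ‖deriv g w‖ ≤ M) :
    ∀ z ∈ Metric.ball (0:ℂ) 1,
      (1 - ‖z‖ ^ 2) ^ (α + 1) * ‖deriv (deriv g) z‖ ≤ 4 ^ (α + 1) * M := by
  intro z hz
  have hz1 : ‖z‖ < 1 := by simpa [mem_ball, dist_eq_norm] using hz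
  have hz0 : (0:ℝ) ≤ ‖z‖ := norm_nonneg z
  set R : ℝ := (1 - ‖z‖) / 2 with hRdef
  have hR : 0 < R := by rw [hRdef]; linarith
  have hsub : Metric.closedBall z R ⊆ Metric.ball (0:ℂ) 1 := by
    intro w hw
    have hw' : ‖w - z‖ ≤ R := by simpa [dist_eq_norm] using hw
    have : ‖w‖ ≤ ‖z‖ + R := by
      calc ‖w‖ = ‖z + (w - z)‖ := by ring_nf
        _ ≤ ‖z‖ + ‖w - z‖ := norm_add_le _ _
        _ ≤ ‖z‖ + R := by linarith
    have : ‖w‖ < 1 := by rw [hRdef] at this; linarith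
    simpa [mem_ball, dist_eq_norm] using this
  have hga : AnalyticOnNhd ℂ g (Metric.ball (0:ℂ) 1) :=
    hg.analyticOnNhd Metric.isOpen_ball
  have hdg : DifferentiableOn ℂ (deriv g) (Metric.ball (0:ℂ) 1) :=
    hga.deriv.differentiableOn
  have hdcc : DiffContOnCl ℂ (deriv g) (Metric.ball z R) := by
    apply DifferentiableOn.diffContOnCl
    rw [closure_ball z hR.ne']
    exact hdg.mono hsub
  have hsphere : ∀ w ∈ Metric.sphere z R, ‖deriv g w‖ ≤ M / R ^ α := by
    intro w hw
    have hw' : ‖w - z‖ = R := by simpa [dist_eq_norm] using hw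
    have hwball : w ∈ Metric.ball (0:ℂ) 1 :=
      hsub (by simpa [Metric.mem_closedBall, dist_eq_norm, hw'] )
    have hw1 : ‖w‖ < 1 := by simpa [mem_ball, dist_eq_norm] using hwball
    have hwz : ‖w‖ ≤ ‖z‖ + R := by
      calc ‖w‖ = ‖z + (w - z)‖ := by ring_nf
        _ ≤ ‖z‖ + ‖w - z‖ := norm_add_le _ _
        _ = ‖z‖ + R := by rw [hw']
    have h1w : R ≤ 1 - ‖w‖ ^ 2 := by
      have h2 : 1 - ‖w‖ ^ 2 = (1 - ‖w‖) * (1 + ‖w‖) := by ring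
      have h3 : 1 - ‖w‖ ≥ R := by rw [hRdef] at hwz ⊢; linarith
      nlinarith [norm_nonneg w]
    have hrp : R ^ α ≤ (1 - ‖w‖ ^ 2) ^ α :=
      Real.rpow_le_rpow hR.le h1w hα.le
    have hkey := hbd w hwball
    have hRα : (0:ℝ) < R ^ α := Real.rpow_pos_of_pos hR α
    rw [le_div_iff₀ hRα]
    calc ‖deriv g w‖ * R ^ α = R ^ α * ‖deriv g w‖ := by ring
      _ ≤ (1 - ‖w‖ ^ 2) ^ α * ‖deriv g w‖ :=
          mul_le_mul_of_nonneg_right hrp (norm_nonneg _)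
      _ ≤ M := hkey
  have hcauchy : ‖deriv (deriv g) z‖ ≤ M / R ^ α / R :=
    Complex.norm_deriv_le_of_forall_mem_sphere_norm_le hR hdcc hsphere
  have hM0 : 0 ≤ M := by
    have h0 := hbd 0 (by simp)
    simp [Real.one_rpow] at h0
    exact le_trans (norm_nonneg _) h0
  have h4R : 1 - ‖z‖ ^ 2 ≤ 4 * R := by
    rw [hRdef]; nlinarith
  have h1z : 0 ≤ 1 - ‖z‖ ^ 2 := by nlinarith
  have hpow : (1 - ‖z‖ ^ 2) ^ (α + 1) ≤ 4 ^ (α + 1) * R ^ (α + 1) := by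
    calc (1 - ‖z‖ ^ 2) ^ (α + 1) ≤ (4 * R) ^ (α + 1) :=
          Real.rpow_le_rpow h1z h4R (by linarith)
      _ = 4 ^ (α + 1) * R ^ (α + 1) := Real.mul_rpow (by norm_num) hR.le
  have hRsplit : R ^ (α + 1) = R ^ α * R := by
    rw [Real.rpow_add hR, Real.rpow_one]
  calc (1 - ‖z‖ ^ 2) ^ (α + 1) * ‖deriv (deriv g) z‖
      ≤ (4 ^ (α + 1) * R ^ (α + 1)) * (M / R ^ α / R) := by
        apply mul_le_mul hpow hcauchy (norm_nonneg _) (by positivity)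
    _ = 4 ^ (α + 1) * M := by
        rw [hRsplit]; field_simp

open Metric Set Complex

lemma deriv_prod_formula (g : ℂ → ℂ)
    (hg : DifferentiableOn ℂ g (Metric.ball (0:ℂ) 1)) (z : ℂ)
    (hz : z ∈ Metric.ball (0:ℂ) 1) :
    deriv (fun w : ℂ => w * (1 - w) * deriv g w) z
      = (1 - 2*z) * deriv g z + z * (1 - z) * deriv (deriv g) z := by
  have hga : AnalyticOnNhd ℂ g (Metric.ball (0:ℂ) 1) :=
    hg.analyticOnNhd Metric.isOpen_ball
  have hd : HasDerivAt (deriv g) (deriv (deriv g) z) z :=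
    (hga.deriv z hz).differentiableAt.hasDerivAt
  have h1 : HasDerivAt (fun w : ℂ => w * (1 - w)) (1 - 2*z) z := by
    have := (hasDerivAt_id z).mul ((hasDerivAt_const z (1:ℂ)).sub (hasDerivAt_id z))
    refine this.congr_deriv ?_
    simp; ring
  have := h1.mul hd
  exact this.deriv


/-- Section 6: for g ∈ B_α^0, f(z) = z(1-z)g'(z) lies in B_{α+1}^0 and C_1(f) = g
(i.e. g(0) = 0 and g'(z) = f(z)/(z(1-z)) on the punctured disk), with the key norm
estimate. Hence B_α^0 is contained in the range of the Cesàro operator on B_{α+1}^0. -/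
theorem stmt_19 (α : ℝ) (hα : 0 < α) (g : ℂ → ℂ)
    (hg : DifferentiableOn ℂ g (Metric.ball (0:ℂ) 1)) (hg0 : g 0 = 0)
    (hgB : BddAbove {c : ℝ | ∃ z ∈ Metric.ball (0:ℂ) 1,
      c = (1 - ‖z‖ ^ 2) ^ α * ‖deriv g z‖}) :
    DifferentiableOn ℂ (fun z : ℂ => z * (1 - z) * deriv g z) (Metric.ball (0:ℂ) 1) ∧
    (fun z : ℂ => z * (1 - z) * deriv g z) 0 = 0 ∧
    BddAbove {c : ℝ | ∃ z ∈ Metric.ball (0:ℂ) 1,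
      c = (1 - ‖z‖ ^ 2) ^ (α + 1) * ‖deriv (deriv g) z‖} ∧
    BddAbove {c : ℝ | ∃ z ∈ Metric.ball (0:ℂ) 1,
      c = (1 - ‖z‖ ^ 2) ^ (α + 1) *
        ‖deriv (fun w : ℂ => w * (1 - w) * deriv g w) z‖} ∧
    sSup {c : ℝ | ∃ z ∈ Metric.ball (0:ℂ) 1,
        c = (1 - ‖z‖ ^ 2) ^ (α + 1) *
          ‖deriv (fun w : ℂ => w * (1 - w) * deriv g w) z‖} ≤
      3 * sSup {c : ℝ | ∃ z ∈ Metric.ball (0:ℂ) 1,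
          c = (1 - ‖z‖ ^ 2) ^ α * ‖deriv g z‖} +
      2 * sSup {c : ℝ | ∃ z ∈ Metric.ball (0:ℂ) 1,
          c = (1 - ‖z‖ ^ 2) ^ (α + 1) * ‖deriv (deriv g) z‖} ∧
    (∀ z ∈ Metric.ball (0:ℂ) 1, z ≠ 0 →
      deriv g z = (z * (1 - z) * deriv g z) / (z * (1 - z))) := by
  set M₁ : ℝ := sSup {c : ℝ | ∃ z ∈ Metric.ball (0:ℂ) 1,
      c = (1 - ‖z‖ ^ 2) ^ α * ‖deriv g z‖} with hM₁def
  have hbd1 : ∀ w ∈ Metric.ball (0:ℂ) 1, (1 - ‖w‖ ^ 2) ^ α * ‖deriv g w‖ ≤ M₁ :=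
    fun w hw => le_csSup hgB ⟨w, hw, rfl⟩
  have hC := cauchy_second α M₁ hα g hg hbd1
  -- conjunct 3
  have hB2 : BddAbove {c : ℝ | ∃ z ∈ Metric.ball (0:ℂ) 1,
      c = (1 - ‖z‖ ^ 2) ^ (α + 1) * ‖deriv (deriv g) z‖} := by
    refine ⟨4 ^ (α + 1) * M₁, ?_⟩
    rintro c ⟨z, hz, rfl⟩
    exact hC z hz
  set M₂ : ℝ := sSup {c : ℝ | ∃ z ∈ Metric.ball (0:ℂ) 1,
      c = (1 - ‖z‖ ^ 2) ^ (α + 1) * ‖deriv (deriv g) z‖} with hM₂def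
  have hbd2 : ∀ w ∈ Metric.ball (0:ℂ) 1,
      (1 - ‖w‖ ^ 2) ^ (α + 1) * ‖deriv (deriv g) w‖ ≤ M₂ :=
    fun w hw => le_csSup hB2 ⟨w, hw, rfl⟩
  -- differentiability
  have hga : AnalyticOnNhd ℂ g (Metric.ball (0:ℂ) 1) :=
    hg.analyticOnNhd Metric.isOpen_ball
  have hdg : DifferentiableOn ℂ (deriv g) (Metric.ball (0:ℂ) 1) :=
    hga.deriv.differentiableOn
  have hdiff : DifferentiableOn ℂ (fun z : ℂ => z * (1 - z) * deriv g z)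
      (Metric.ball (0:ℂ) 1) :=
    ((differentiableOn_id.mul ((differentiableOn_const 1).sub
      differentiableOn_id))).mul hdg
  -- pointwise key estimate
  have hkey : ∀ z ∈ Metric.ball (0:ℂ) 1,
      (1 - ‖z‖ ^ 2) ^ (α + 1) *
        ‖deriv (fun w : ℂ => w * (1 - w) * deriv g w) z‖ ≤ 3 * M₁ + 2 * M₂ := by
    intro z hz
    have hz1 : ‖z‖ < 1 := by simpa [mem_ball, dist_eq_norm] using hz
    have ht0 : 0 < 1 - ‖z‖ ^ 2 := by nlinarith [norm_nonneg z]
    have ht1 : 1 - ‖z‖ ^ 2 ≤ 1 := by nlinarith [norm_nonneg z]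
    have hA : (1 - ‖z‖ ^ 2) ^ (α + 1) ≤ (1 - ‖z‖ ^ 2) ^ α :=
      Real.rpow_le_rpow_of_exponent_ge ht0 ht1 (by linarith)
    have hf' : ‖deriv (fun w : ℂ => w * (1 - w) * deriv g w) z‖
        ≤ 3 * ‖deriv g z‖ + 2 * ‖deriv (deriv g) z‖ := by
      rw [deriv_prod_formula g hg z hz]
      have n1 : ‖(1 - 2*z : ℂ)‖ ≤ 3 := by
        calc ‖(1 - 2*z : ℂ)‖ ≤ ‖(1:ℂ)‖ + ‖(2*z : ℂ)‖ := norm_sub_le _ _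
          _ = 1 + 2 * ‖z‖ := by simp [norm_mul]
          _ ≤ 3 := by linarith
      have n2 : ‖(z * (1 - z) : ℂ)‖ ≤ 2 := by
        rw [norm_mul]
        have h3 : ‖(1 - z : ℂ)‖ ≤ 1 + ‖z‖ := by
          calc ‖(1 - z : ℂ)‖ ≤ ‖(1:ℂ)‖ + ‖z‖ := norm_sub_le _ _
            _ = 1 + ‖z‖ := by simp
        nlinarith [norm_nonneg z, norm_nonneg (1 - z : ℂ)]
      calc ‖(1 - 2*z) * deriv g z + z * (1 - z) * deriv (deriv g) z‖
          ≤ ‖(1 - 2*z) * deriv g z‖ + ‖z * (1 - z) * deriv (deriv g) z‖ :=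
            norm_add_le _ _
        _ = ‖(1 - 2*z : ℂ)‖ * ‖deriv g z‖ + ‖(z * (1 - z) : ℂ)‖ * ‖deriv (deriv g) z‖ := by
            rw [norm_mul, norm_mul]
        _ ≤ 3 * ‖deriv g z‖ + 2 * ‖deriv (deriv g) z‖ :=
            add_le_add (mul_le_mul_of_nonneg_right n1 (norm_nonneg _))
              (mul_le_mul_of_nonneg_right n2 (norm_nonneg _))
    have e1 := hbd1 z hz
    have e2 := hbd2 z hz
    have ht0' : (0:ℝ) ≤ (1 - ‖z‖ ^ 2) ^ (α + 1) := Real.rpow_nonneg ht0.le _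
    calc (1 - ‖z‖ ^ 2) ^ (α + 1) * ‖deriv (fun w : ℂ => w * (1 - w) * deriv g w) z‖
        ≤ (1 - ‖z‖ ^ 2) ^ (α + 1) * (3 * ‖deriv g z‖ + 2 * ‖deriv (deriv g) z‖) :=
          mul_le_mul_of_nonneg_left hf' ht0'
      _ = 3 * ((1 - ‖z‖ ^ 2) ^ (α + 1) * ‖deriv g z‖)
          + 2 * ((1 - ‖z‖ ^ 2) ^ (α + 1) * ‖deriv (deriv g) z‖) := by ring
      _ ≤ 3 * ((1 - ‖z‖ ^ 2) ^ α * ‖deriv g z‖)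
          + 2 * ((1 - ‖z‖ ^ 2) ^ (α + 1) * ‖deriv (deriv g) z‖) := by
          have := mul_le_mul_of_nonneg_right hA (norm_nonneg (deriv g z))
          linarith
      _ ≤ 3 * M₁ + 2 * M₂ := by linarith
  have hB3 : BddAbove {c : ℝ | ∃ z ∈ Metric.ball (0:ℂ) 1,
      c = (1 - ‖z‖ ^ 2) ^ (α + 1) *
        ‖deriv (fun w : ℂ => w * (1 - w) * deriv g w) z‖} := by
    refine ⟨3 * M₁ + 2 * M₂, ?_⟩
    rintro c ⟨z, hz, rfl⟩
    exact hkey z hz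
  refine ⟨hdiff, by simp, hB2, hB3, ?_, ?_⟩
  · apply csSup_le
    · exact ⟨_, ⟨0, by simp, rfl⟩⟩
    · rintro c ⟨z, hz, rfl⟩
      exact hkey z hz
  · intro z hz hz0
    have hz1 : ‖z‖ < 1 := by simpa [mem_ball, dist_eq_norm] using hz
    have h1z : (1 : ℂ) - z ≠ 0 := by
      intro h
      have : z = 1 := by linear_combination -h
      rw [this] at hz1; simp at hz1
    rw [eq_div_iff (mul_ne_zero hz0 h1z)]
    ring
end
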